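/- arXiv:1604.07456 — 4 statements merged into one kernel-verified Lean document; each statement's English description precedes it below -/
import Mathlib

section
/- The operators T_1,…,T_{k−1} satisfy the Hecke quadratic relation (T_i − 1)(T_i + q) = 0 as K-linear operators on L, the braid relations T_i T_{i+1} T_i = T_{i+1} T_i T_{i+1} for 1 ≤ i ≤ k−2, and the commutation relations T_i T_j = T_j T_i whenever |i − j| > 1. In particular each T_i is invertible with T_i^{-1} = q^{-1}(T_i + q − 1). -/
noncomputable section

/-- The field `K = ℚ(q)` of rational functions in one variable `q` over `ℚ`. -/
abbrev Kq : Type := RatFunc ℚ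

/-- The field `L = K(y_1,…,y_k)` of rational functions in `k` variables over `K`. -/
abbrev Lk (k : ℕ) : Type := FractionRing (MvPolynomial (Fin k) Kq)

/-- The variable `y_i ∈ L`. -/
def yy {k : ℕ} (i : Fin k) : Lk k :=
  algebraMap (MvPolynomial (Fin k) Kq) (Lk k) (MvPolynomial.X i)

/-- The element `q ∈ L`. -/
def qL (k : ℕ) : Lk k := algebraMap Kq (Lk k) RatFunc.X

/-- The Demazure–Lusztig type operator
`T_i F = ((q−1)·y_i·F + (y_{i+1} − q·y_i)·s_i(F)) / (y_{i+1} − y_i)`,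
where `s_i` interchanges `y_i` and `y_{i+1}`. -/
def Tdl {k : ℕ} (s : ℕ → Lk k → Lk k) (i : ℕ) (hi : i + 1 < k) (F : Lk k) : Lk k :=
  ((qL k - 1) * yy ⟨i, Nat.lt_of_succ_lt hi⟩ * F +
      (yy ⟨i + 1, hi⟩ - qL k * yy ⟨i, Nat.lt_of_succ_lt hi⟩) * s i F) /
    (yy ⟨i + 1, hi⟩ - yy ⟨i, Nat.lt_of_succ_lt hi⟩)

/- ### Auxiliary lemmas -/

lemma yy_ne {k : ℕ} {a b : Fin k} (h : a ≠ b) : yy a - yy b ≠ 0 := by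
  rw [sub_ne_zero]
  intro e
  exact h (MvPolynomial.X_injective (IsFractionRing.injective (MvPolynomial (Fin k) Kq) (Lk k) e))

lemma qL_ne {k : ℕ} : qL k ≠ 0 := by
  simpa [qL] using (map_ne_zero (algebraMap Kq (Lk k))).mpr RatFunc.X_ne_zero

lemma eq_on_vars {k : ℕ} (e1 e2 : Lk k ≃ₐ[Kq] Lk k) (h : ∀ j, e1 (yy j) = e2 (yy j)) (F : Lk k) :
    e1 F = e2 F := by
  have halg : ∀ p : MvPolynomial (Fin k) Kq,
      e1 (algebraMap _ (Lk k) p) = e2 (algebraMap _ (Lk k) p) := by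
    intro p
    have h2 : (e1.toAlgHom.comp (IsScalarTower.toAlgHom Kq (MvPolynomial (Fin k) Kq) (Lk k))) =
        (e2.toAlgHom.comp (IsScalarTower.toAlgHom Kq (MvPolynomial (Fin k) Kq) (Lk k))) :=
      MvPolynomial.algHom_ext fun i => h i
    exact AlgHom.congr_fun h2 p
  obtain ⟨p, q, hq, rfl⟩ := IsFractionRing.div_surjective (A := MvPolynomial (Fin k) Kq) F
  rw [map_div₀, map_div₀, halg, halg]

section S
set_option linter.unusedSectionVars false

variable {k : ℕ} (s : ℕ → (Lk k ≃ₐ[Kq] Lk k))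
    (hs : ∀ (i : ℕ) (hi : i + 1 < k) (j : Fin k),
      s i (yy j) = yy (Equiv.swap ⟨i, Nat.lt_of_succ_lt hi⟩ ⟨i + 1, hi⟩ j))
include hs

lemma s_qL (i : ℕ) : s i (qL k) = qL k := (s i).commutes _

lemma s_left (i : ℕ) (hi : i + 1 < k) :
    s i (yy ⟨i, Nat.lt_of_succ_lt hi⟩) = yy ⟨i + 1, hi⟩ := by
  rw [hs i hi, Equiv.swap_apply_left]

lemma s_right (i : ℕ) (hi : i + 1 < k) :
    s i (yy ⟨i + 1, hi⟩) = yy ⟨i, Nat.lt_of_succ_lt hi⟩ := by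
  rw [hs i hi, Equiv.swap_apply_right]

lemma s_other (i : ℕ) (hi : i + 1 < k) (m : ℕ) (hm : m < k) (h1 : m ≠ i) (h2 : m ≠ i + 1) :
    s i (yy ⟨m, hm⟩) = yy ⟨m, hm⟩ := by
  rw [hs i hi, Equiv.swap_apply_of_ne_of_ne (by simp [Fin.ext_iff, h1]) (by simp [Fin.ext_iff, h2])]

lemma s_invol (i : ℕ) (hi : i + 1 < k) (F : Lk k) : s i (s i F) = F := by
  have := eq_on_vars ((s i).trans (s i)) AlgEquiv.refl (fun j => by
    simp only [AlgEquiv.trans_apply, hs i hi, Equiv.swap_apply_self, AlgEquiv.coe_refl, id_eq]) F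
  simpa using this

set_option maxHeartbeats 2000000 in
lemma s_braid (i : ℕ) (hi : i + 2 < k) (F : Lk k) :
    s i (s (i+1) (s i F)) = s (i+1) (s i (s (i+1) F)) := by
  have := eq_on_vars ((s i).trans ((s (i+1)).trans (s i)))
    ((s (i+1)).trans ((s i).trans (s (i+1)))) (fun j => by
      simp only [AlgEquiv.trans_apply, hs i (Nat.lt_of_succ_lt hi), hs (i+1) hi]
      congr 1
      obtain ⟨m, hm⟩ := j
      simp only [Equiv.swap_apply_def, Fin.ext_iff, apply_ite Fin.val, Fin.val_mk]
      split_ifs <;> omega) F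
  simpa using this

set_option maxHeartbeats 2000000 in
lemma s_comm (i j : ℕ) (hi : i + 1 < k) (hj : j + 1 < k) (hij : i + 1 < j ∨ j + 1 < i)
    (F : Lk k) : s i (s j F) = s j (s i F) := by
  have := eq_on_vars ((s j).trans (s i)) ((s i).trans (s j)) (fun m => by
      simp only [AlgEquiv.trans_apply, hs i hi, hs j hj]
      congr 1
      obtain ⟨n, hn⟩ := m
      simp only [Equiv.swap_apply_def, Fin.ext_iff, apply_ite Fin.val, Fin.val_mk]
      split_ifs <;> omega) F
  simpa using this

end S


set_option maxHeartbeats 1000000 in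
lemma braid_core {L : Type*} [Field L] (q x y z F F1 F2 F12 F21 B : L)
    (h1 : y - x ≠ 0) (h2 : x - y ≠ 0) (h3 : z - y ≠ 0) (h4 : y - z ≠ 0)
    (h5 : z - x ≠ 0) (h6 : x - z ≠ 0) :
    ((q - 1) * x *
          (((q - 1) * y * (((q - 1) * x * F + (y - q * x) * F1) / (y - x)) +
              (z - q * y) * (((q - 1) * x * F2 + (z - q * x) * F21) / (z - x))) /
            (z - y)) +
        (y - q * x) *
          (((q - 1) * x * (((q - 1) * y * F1 + (x - q * y) * F) / (x - y)) +
              (z - q * x) * (((q - 1) * y * F12 + (z - q * y) * B) / (z - y))) /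
            (z - x))) /
      (y - x) =
    ((q - 1) * y *
          (((q - 1) * x * (((q - 1) * y * F + (z - q * y) * F2) / (z - y)) +
              (y - q * x) * (((q - 1) * x * F1 + (z - q * x) * F12) / (z - x))) /
            (y - x)) +
        (z - q * y) *
          (((q - 1) * x * (((q - 1) * z * F2 + (y - q * z) * F) / (y - z)) +
              (z - q * x) * (((q - 1) * x * F21 + (y - q * x) * B) / (y - x))) /
            (z - x))) /
      (z - y) := by
  field_simp
  ring

set_option maxHeartbeats 4000000 in
set_option synthInstance.maxHeartbeats 400000 in
/-- The operators `T_1,…,T_{k−1}` (indexed here by `0 ≤ i < k−1`) are `K`-linear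
operators on `L` satisfying the Hecke quadratic relation `(T_i − 1)(T_i + q) = 0`,
the braid relations, and the commutation relations `T_i T_j = T_j T_i` for `|i−j| > 1`;
each `T_i` is invertible with `T_i⁻¹ = q⁻¹(T_i + q − 1)`. -/
theorem Tdl_hecke_braid_relations (k : ℕ) (hk : 2 ≤ k)
    (s : ℕ → (Lk k ≃ₐ[Kq] Lk k))
    (hs : ∀ (i : ℕ) (hi : i + 1 < k) (j : Fin k),
      s i (yy j) = yy (Equiv.swap ⟨i, Nat.lt_of_succ_lt hi⟩ ⟨i + 1, hi⟩ j)) :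
    -- K-linearity
    (∀ (i : ℕ) (hi : i + 1 < k) (a : Kq) (F G : Lk k),
      Tdl (fun n => ⇑(s n)) i hi (algebraMap Kq (Lk k) a * F + G) =
        algebraMap Kq (Lk k) a * Tdl (fun n => ⇑(s n)) i hi F +
          Tdl (fun n => ⇑(s n)) i hi G) ∧
    -- the Hecke quadratic relation (T_i − 1)(T_i + q) = 0
    (∀ (i : ℕ) (hi : i + 1 < k) (F : Lk k),
      Tdl (fun n => ⇑(s n)) i hi (Tdl (fun n => ⇑(s n)) i hi F) +
          (qL k - 1) * Tdl (fun n => ⇑(s n)) i hi F - qL k * F = 0) ∧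
    -- the braid relations
    (∀ (i : ℕ) (hi : i + 2 < k) (F : Lk k),
      Tdl (fun n => ⇑(s n)) i (Nat.lt_of_succ_lt hi)
          (Tdl (fun n => ⇑(s n)) (i + 1) hi
            (Tdl (fun n => ⇑(s n)) i (Nat.lt_of_succ_lt hi) F)) =
        Tdl (fun n => ⇑(s n)) (i + 1) hi
          (Tdl (fun n => ⇑(s n)) i (Nat.lt_of_succ_lt hi)
            (Tdl (fun n => ⇑(s n)) (i + 1) hi F))) ∧
    -- commutation for |i − j| > 1
    (∀ (i j : ℕ) (hi : i + 1 < k) (hj : j + 1 < k), (i + 1 < j ∨ j + 1 < i) →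
      ∀ F : Lk k,
        Tdl (fun n => ⇑(s n)) i hi (Tdl (fun n => ⇑(s n)) j hj F) =
          Tdl (fun n => ⇑(s n)) j hj (Tdl (fun n => ⇑(s n)) i hi F)) ∧
    -- invertibility: T_i⁻¹ = q⁻¹ (T_i + q − 1)
    (∀ (i : ℕ) (hi : i + 1 < k) (F : Lk k),
      Tdl (fun n => ⇑(s n)) i hi
          ((qL k)⁻¹ * (Tdl (fun n => ⇑(s n)) i hi F + (qL k - 1) * F)) = F ∧
      (qL k)⁻¹ * (Tdl (fun n => ⇑(s n)) i hi (Tdl (fun n => ⇑(s n)) i hi F) +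
          (qL k - 1) * Tdl (fun n => ⇑(s n)) i hi F) = F) := by
  refine ⟨?_, ?_, ?_, ?_, ?_⟩
  · -- linearity
    intro i hi a F G
    have hd : yy (⟨i + 1, hi⟩ : Fin k) - yy ⟨i, Nat.lt_of_succ_lt hi⟩ ≠ 0 :=
      yy_ne (by simp [Fin.ext_iff])
    simp only [Tdl, map_add, map_mul, AlgEquiv.commutes]
    field_simp
    ring
  · -- quadratic
    intro i hi F
    have hL := s_left s hs i hi
    have hR := s_right s hs i hi
    have hq := s_qL s hs i
    have hInv := s_invol s hs i hi
    have hd : yy (⟨i + 1, hi⟩ : Fin k) - yy ⟨i, Nat.lt_of_succ_lt hi⟩ ≠ 0 :=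
      yy_ne (by simp [Fin.ext_iff])
    have hd' : yy (⟨i, Nat.lt_of_succ_lt hi⟩ : Fin k) - yy ⟨i + 1, hi⟩ ≠ 0 :=
      yy_ne (by simp [Fin.ext_iff])
    simp only [Tdl, map_div₀, map_add, map_mul, map_sub, map_one, hL, hR, hq, hInv]
    field_simp
    ring
  · -- braid
    intro i hi F
    have hi1 : i + 1 < k := by omega
    have hLi := s_left s hs i hi1
    have hRi := s_right s hs i hi1
    have hLj := s_left s hs (i + 1) hi
    have hRj := s_right s hs (i + 1) hi
    have hOi := s_other s hs i hi1 (i + 1 + 1) hi (by omega) (by omega)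
    have hOj := s_other s hs (i + 1) hi i (by omega) (by omega) (by omega)
    have hqi := s_qL s hs i
    have hqj := s_qL s hs (i + 1)
    have hIi := s_invol s hs i hi1
    have hIj := s_invol s hs (i + 1) hi
    have hbr := s_braid s hs i hi
    have h1 : yy (⟨i + 1, Nat.lt_of_succ_lt hi⟩ : Fin k) - yy ⟨i, Nat.lt_of_succ_lt hi1⟩ ≠ 0 :=
      yy_ne (by simp [Fin.ext_iff])
    have h2 : yy (⟨i, Nat.lt_of_succ_lt hi1⟩ : Fin k) - yy ⟨i + 1, Nat.lt_of_succ_lt hi⟩ ≠ 0 :=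
      yy_ne (by simp [Fin.ext_iff])
    have h3 : yy (⟨i + 1 + 1, hi⟩ : Fin k) - yy ⟨i + 1, Nat.lt_of_succ_lt hi⟩ ≠ 0 :=
      yy_ne (by simp [Fin.ext_iff])
    have h4 : yy (⟨i + 1, Nat.lt_of_succ_lt hi⟩ : Fin k) - yy ⟨i + 1 + 1, hi⟩ ≠ 0 :=
      yy_ne (by simp [Fin.ext_iff])
    have h5 : yy (⟨i + 1 + 1, hi⟩ : Fin k) - yy ⟨i, Nat.lt_of_succ_lt hi1⟩ ≠ 0 :=
      yy_ne (by simp [Fin.ext_iff]; omega)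
    have h6 : yy (⟨i, Nat.lt_of_succ_lt hi1⟩ : Fin k) - yy ⟨i + 1 + 1, hi⟩ ≠ 0 :=
      yy_ne (by simp [Fin.ext_iff]; omega)
    simp only [Tdl, map_div₀, map_add, map_mul, map_sub, map_one,
      hLi, hRi, hLj, hRj, hOi, hOj, hqi, hqj, hIi, hIj, hbr]
    generalize (s (i+1)) ((s i) ((s (i+1)) F)) = B
    generalize (s i) ((s (i+1)) F) = F12
    generalize (s (i+1)) ((s i) F) = F21
    generalize (s i) F = F1
    generalize (s (i+1)) F = F2
    generalize hqq : qL k = q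
    generalize hx : yy ⟨i, Nat.lt_of_succ_lt hi1⟩ = x
    generalize hy : yy ⟨i+1, Nat.lt_of_succ_lt hi⟩ = y
    generalize hz : yy ⟨i+1+1, hi⟩ = z
    rw [hx, hy] at h1 h2
    rw [hy, hz] at h3 h4
    rw [hx, hz] at h5 h6
    exact braid_core q x y z F F1 F2 F12 F21 B h1 h2 h3 h4 h5 h6
  · -- commutation
    intro i j hi hj hij F
    have hLi := s_left s hs i hi
    have hRi := s_right s hs i hi
    have hLj := s_left s hs j hj
    have hRj := s_right s hs j hj
    have hOij := s_other s hs i hi j (Nat.lt_of_succ_lt hj) (by omega) (by omega)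
    have hOij1 := s_other s hs i hi (j + 1) hj (by omega) (by omega)
    have hOji := s_other s hs j hj i (Nat.lt_of_succ_lt hi) (by omega) (by omega)
    have hOji1 := s_other s hs j hj (i + 1) hi (by omega) (by omega)
    have hqi := s_qL s hs i
    have hqj := s_qL s hs j
    have hcomm := s_comm s hs i j hi hj hij
    have h1 : yy (⟨i + 1, hi⟩ : Fin k) - yy ⟨i, Nat.lt_of_succ_lt hi⟩ ≠ 0 :=
      yy_ne (by simp [Fin.ext_iff])
    have h2 : yy (⟨j + 1, hj⟩ : Fin k) - yy ⟨j, Nat.lt_of_succ_lt hj⟩ ≠ 0 :=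
      yy_ne (by simp [Fin.ext_iff])
    simp only [Tdl, map_div₀, map_add, map_mul, map_sub, map_one,
      hLi, hRi, hLj, hRj, hOij, hOij1, hOji, hOji1, hqi, hqj, hcomm]
    field_simp
    ring
  · -- invertibility
    intro i hi F
    have hL := s_left s hs i hi
    have hR := s_right s hs i hi
    have hq := s_qL s hs i
    have hInv := s_invol s hs i hi
    have hd : yy (⟨i + 1, hi⟩ : Fin k) - yy ⟨i, Nat.lt_of_succ_lt hi⟩ ≠ 0 :=
      yy_ne (by simp [Fin.ext_iff])
    have hd' : yy (⟨i, Nat.lt_of_succ_lt hi⟩ : Fin k) - yy ⟨i + 1, hi⟩ ≠ 0 :=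
      yy_ne (by simp [Fin.ext_iff])
    have hq0 : qL k ≠ 0 := qL_ne
    constructor
    · simp only [Tdl, map_div₀, map_add, map_mul, map_sub, map_one, map_inv₀,
        hL, hR, hq, hInv]
      field_simp
      ring
    · have quad : Tdl (fun n => ⇑(s n)) i hi (Tdl (fun n => ⇑(s n)) i hi F) +
          (qL k - 1) * Tdl (fun n => ⇑(s n)) i hi F - qL k * F = 0 := by
        simp only [Tdl, map_div₀, map_add, map_mul, map_sub, map_one, hL, hR, hq, hInv]
        field_simp
        ring
      rw [sub_eq_zero] at quad
      rw [quad, inv_mul_cancel_left₀ hq0]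
end
end

section
/- Define D_+ := −(qt)^{-1}·z_1·d_+ : V_k → V_{k+1} (where z_1 acts on V_{k+1}). Then (T_i, d_−, D_+) again satisfy the defining relations of an action of 𝔸_q: T_1 D_+² = D_+²; D_+ T_i = T_{i+1} D_+ for 1 ≤ i ≤ k−1; d_−(D_+d_− − d_−D_+)T_{k−1} = q(D_+d_− − d_−D_+)d_− for k ≥ 2; and T_1(D_+d_− − d_−D_+)D_+ = q·D_+(D_+d_− − d_−D_+) for k ≥ 1. Moreover the pair consisting of (T_i, d_−, D_+) and the original (T_i^{-1}, d_−, d_+*) is again correctly intertwined: setting Y_1 := (1/(q^{k−1}(q−1)))(D_+d_− − d_−D_+)T_{k↘1} and Y_{i+1} := q·T_i^{-1} Y_i T_i^{-1} on V_k, one has D_+ z_i = z_{i+1} D_+ and d_+* Y_i = Y_{i+1} d_+* for 1 ≤ i ≤ k, and z_1 D_+ = −t·q^{k+1}·Y_1·d_+* as maps V_k → V_{k+1}. -/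
noncomputable section

open LinearMap

/-- `T_i⁻¹ = q⁻¹ (T_i + (q − 1))`, the inverse of a Hecke operator. -/
def heckeInv {F : Type*} [Field F] (q : F) {M : Type*} [AddCommGroup M] [Module F M]
    (t : Module.End F M) : Module.End F M :=
  q⁻¹ • (t + (q - 1) • (1 : Module.End F M))

/-- `TdownTo1 T j = T_{j↘1} = T_{j−1} T_{j−2} ⋯ T_1`. -/
def TdownTo1 {M : Type*} [Monoid M] (T : ℕ → M) : ℕ → M
  | 0 => 1
  | 1 => 1
  | j + 2 => T (j + 1) * TdownTo1 T (j + 1)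

/-- `TupFrom1 T j = T_{1↗j} = T_1 T_2 ⋯ T_{j−1}`. -/
def TupFrom1 {M : Type*} [Monoid M] (T : ℕ → M) : ℕ → M
  | 0 => 1
  | 1 => 1
  | j + 2 => TupFrom1 T (j + 1) * T (j + 1)

/-- The commutator `d₊d₋ − d₋d₊` as an operator on `V (m+1)`. -/
def commDD {F : Type*} [Field F] (V : ℕ → Type*) [∀ k, AddCommGroup (V k)]
    [∀ k, Module F (V k)] (dm : ∀ k, V (k + 1) →ₗ[F] V k)
    (dp : ∀ k, V k →ₗ[F] V (k + 1)) (m : ℕ) : Module.End F (V (m + 1)) :=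
  dp m ∘ₗ dm m - dm (m + 1) ∘ₗ dp (m + 1)

/-- The operators `y_i` on `V (m+1)`:
`y_1 = (q^{k−1}(q−1))⁻¹ (d₊d₋ − d₋d₊) T_{k↘1}` (with `k = m+1`) and
`y_{i+1} = q T_i⁻¹ y_i T_i⁻¹`. -/
def yOp {F : Type*} [Field F] (q : F) (V : ℕ → Type*) [∀ k, AddCommGroup (V k)]
    [∀ k, Module F (V k)] (T : ∀ k, ℕ → Module.End F (V k))
    (dm : ∀ k, V (k + 1) →ₗ[F] V k) (dp : ∀ k, V k →ₗ[F] V (k + 1)) (m : ℕ) :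
    ℕ → Module.End F (V (m + 1))
  | 0 => 1
  | 1 => (q ^ m * (q - 1))⁻¹ • (commDD V dm dp m * TdownTo1 (T (m + 1)) (m + 1))
  | i + 2 => q • (heckeInv q (T (m + 1) (i + 1)) * yOp q V T dm dp m (i + 1) *
      heckeInv q (T (m + 1) (i + 1)))

/-- The operators `z_i` on `V (m+1)`:
`z_1 = (q^k/(1−q)) (d₊*d₋ − d₋d₊*) T*_{k↘1}` (with `k = m+1`) and
`z_{i+1} = q⁻¹ T_i z_i T_i`. -/
def zOp {F : Type*} [Field F] (q : F) (V : ℕ → Type*) [∀ k, AddCommGroup (V k)]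
    [∀ k, Module F (V k)] (T : ∀ k, ℕ → Module.End F (V k))
    (dm : ∀ k, V (k + 1) →ₗ[F] V k) (dps : ∀ k, V k →ₗ[F] V (k + 1)) (m : ℕ) :
    ℕ → Module.End F (V (m + 1))
  | 0 => 1
  | 1 => (q ^ (m + 1) / (1 - q)) •
      (commDD V dm dps m * TdownTo1 (fun i => heckeInv q (T (m + 1) i)) (m + 1))
  | i + 2 => q⁻¹ • (T (m + 1) (i + 1) * zOp q V T dm dps m (i + 1) * T (m + 1) (i + 1))

/-- The defining relations of an action of the Dyck path algebra `𝔸_q` on the family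
`V_k`, for operators `T_i : V_k → V_k` (`1 ≤ i ≤ k−1`), `d₋ : V_{k+1} → V_k`,
`d₊ : V_k → V_{k+1}`. -/
def AqRel {F : Type*} [Field F] (q : F) (V : ℕ → Type*) [∀ k, AddCommGroup (V k)]
    [∀ k, Module F (V k)] (T : ∀ k, ℕ → Module.End F (V k))
    (dm : ∀ k, V (k + 1) →ₗ[F] V k) (dp : ∀ k, V k →ₗ[F] V (k + 1)) : Prop :=
  (∀ k i, 1 ≤ i → i + 1 ≤ k →
    (T k i - 1) * (T k i + q • (1 : Module.End F (V k))) = 0) ∧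
  (∀ k i, 1 ≤ i → i + 2 ≤ k →
    T k i * T k (i + 1) * T k i = T k (i + 1) * T k i * T k (i + 1)) ∧
  (∀ k i j, 1 ≤ i → i + 1 ≤ k → 1 ≤ j → j + 1 ≤ k → i + 1 < j →
    T k i * T k j = T k j * T k i) ∧
  (∀ m, dm m ∘ₗ dm (m + 1) ∘ₗ (T (m + 2) (m + 1) : V (m + 2) →ₗ[F] V (m + 2)) =
    dm m ∘ₗ dm (m + 1)) ∧
  (∀ m i, 1 ≤ i → i ≤ m →
    (T (m + 1) i : V (m + 1) →ₗ[F] V (m + 1)) ∘ₗ dm (m + 1) =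
      dm (m + 1) ∘ₗ (T (m + 2) i : V (m + 2) →ₗ[F] V (m + 2))) ∧
  (∀ m, (T (m + 2) 1 : V (m + 2) →ₗ[F] V (m + 2)) ∘ₗ dp (m + 1) ∘ₗ dp m =
    dp (m + 1) ∘ₗ dp m) ∧
  (∀ m i, 1 ≤ i → i ≤ m →
    dp (m + 1) ∘ₗ (T (m + 1) i : V (m + 1) →ₗ[F] V (m + 1)) =
      (T (m + 2) (i + 1) : V (m + 2) →ₗ[F] V (m + 2)) ∘ₗ dp (m + 1)) ∧
  (∀ m, dm (m + 1) ∘ₗ (commDD V dm dp (m + 1) : V (m + 2) →ₗ[F] V (m + 2)) ∘ₗ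
      (T (m + 2) (m + 1) : V (m + 2) →ₗ[F] V (m + 2)) =
    q • ((commDD V dm dp m : V (m + 1) →ₗ[F] V (m + 1)) ∘ₗ dm (m + 1))) ∧
  (∀ m, (T (m + 2) 1 : V (m + 2) →ₗ[F] V (m + 2)) ∘ₗ
      (commDD V dm dp (m + 1) : V (m + 2) →ₗ[F] V (m + 2)) ∘ₗ dp (m + 1) =
    q • (dp (m + 1) ∘ₗ (commDD V dm dp m : V (m + 1) →ₗ[F] V (m + 1))))

/-- The intertwining relations between an action of `𝔸_q` (with `d₊`) and an action of
`𝔸_{q⁻¹}` (with `d₊*`): `d₊ z_i = z_{i+1} d₊`, `d₊* y_i = y_{i+1} d₊*` for `1 ≤ i ≤ k`,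
and `z_1 d₊ = −t q^{k+1} y_1 d₊* : V_k → V_{k+1}`. -/
def IntertwineRel {F : Type*} [Field F] (q t : F) (V : ℕ → Type*)
    [∀ k, AddCommGroup (V k)] [∀ k, Module F (V k)]
    (T : ∀ k, ℕ → Module.End F (V k)) (dm : ∀ k, V (k + 1) →ₗ[F] V k)
    (dp dps : ∀ k, V k →ₗ[F] V (k + 1)) : Prop :=
  (∀ m i, 1 ≤ i → i ≤ m + 1 →
    dp (m + 1) ∘ₗ (zOp q V T dm dps m i : V (m + 1) →ₗ[F] V (m + 1)) =
      (zOp q V T dm dps (m + 1) (i + 1) : V (m + 2) →ₗ[F] V (m + 2)) ∘ₗ dp (m + 1)) ∧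
  (∀ m i, 1 ≤ i → i ≤ m + 1 →
    dps (m + 1) ∘ₗ (yOp q V T dm dp m i : V (m + 1) →ₗ[F] V (m + 1)) =
      (yOp q V T dm dp (m + 1) (i + 1) : V (m + 2) →ₗ[F] V (m + 2)) ∘ₗ dps (m + 1)) ∧
  (∀ m, (zOp q V T dm dps m 1 : V (m + 1) →ₗ[F] V (m + 1)) ∘ₗ dp m =
    (-(t * q ^ (m + 1))) •
      ((yOp q V T dm dp m 1 : V (m + 1) →ₗ[F] V (m + 1)) ∘ₗ dps m))

/-- A pair of correctly intertwined actions of `𝔸_q` and `𝔸_{q⁻¹}`: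
`(T, d₋, d₊)` satisfies the relations of `𝔸_q`, `(T⁻¹, d₋, d₊*)` satisfies the relations
of `𝔸_{q⁻¹}`, and the two are correctly intertwined. -/
def CorrectlyIntertwined {F : Type*} [Field F] (q t : F) (V : ℕ → Type*)
    [∀ k, AddCommGroup (V k)] [∀ k, Module F (V k)]
    (T : ∀ k, ℕ → Module.End F (V k)) (dm : ∀ k, V (k + 1) →ₗ[F] V k)
    (dp dps : ∀ k, V k →ₗ[F] V (k + 1)) : Prop :=
  AqRel q V T dm dp ∧
  AqRel q⁻¹ V (fun k i => heckeInv q (T k i)) dm dps ∧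
  IntertwineRel q t V T dm dp dps

/-- The field `ℚ(q,t)` of rational functions in two variables over `ℚ`. -/
abbrev Fqt : Type := FractionRing (MvPolynomial (Fin 2) ℚ)

/-- The element `q` of `ℚ(q,t)`. -/
def qv : Fqt := algebraMap (MvPolynomial (Fin 2) ℚ) Fqt (MvPolynomial.X 0)

/-- The element `t` of `ℚ(q,t)`. -/
def tv : Fqt := algebraMap (MvPolynomial (Fin 2) ℚ) Fqt (MvPolynomial.X 1)

section Basics
variable {F : Type*} [Field F] {M : Type*} [AddCommGroup M] [Module F M]

lemma hecke_sq {q : F} {A : Module.End F M}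
    (hA : (A - 1) * (A + q • (1 : Module.End F M)) = 0) :
    A * A = (1 - q) • A + q • (1 : Module.End F M) := by
  have h1 : (A - 1) * (A + q • (1 : Module.End F M))
      = A * A - ((1 - q) • A + q • (1 : Module.End F M)) := by
    simp only [sub_mul, mul_add, one_mul, mul_one, mul_smul_comm]
    module
  rw [h1] at hA
  exact sub_eq_zero.mp hA

lemma heckeInv_mul_self {q : F} (hq : q ≠ 0) {A : Module.End F M}
    (hA : (A - 1) * (A + q • (1 : Module.End F M)) = 0) :
    heckeInv q A * A = 1 := by
  rw [heckeInv, smul_mul_assoc, add_mul, smul_mul_assoc, one_mul, hecke_sq hA]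
  have h2 : (1 - q) • A + q • (1 : Module.End F M) + (q - 1) • A = q • (1 : Module.End F M) := by
    module
  rw [h2, smul_smul, inv_mul_cancel₀ hq, one_smul]

lemma self_mul_heckeInv {q : F} (hq : q ≠ 0) {A : Module.End F M}
    (hA : (A - 1) * (A + q • (1 : Module.End F M)) = 0) :
    A * heckeInv q A = 1 := by
  rw [heckeInv, mul_smul_comm, mul_add, mul_smul_comm, mul_one, hecke_sq hA]
  have h2 : (1 - q) • A + q • (1 : Module.End F M) + (q - 1) • A = q • (1 : Module.End F M) := by
    module
  rw [h2, smul_smul, inv_mul_cancel₀ hq, one_smul]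

lemma heckeInv_heckeInv {q : F} (hq : q ≠ 0) (A : Module.End F M) :
    heckeInv q⁻¹ (heckeInv q A) = A := by
  simp only [heckeInv, inv_inv, smul_add, smul_smul]
  match_scalars
  · field_simp
  · field_simp
    ring

lemma heckeInv_comm {q : F} {A B : Module.End F M} (hAB : A * B = B * A) :
    heckeInv q A * B = B * heckeInv q A := by
  simp only [heckeInv, smul_mul_assoc, mul_smul_comm, add_mul, mul_add, one_mul, mul_one, hAB]

lemma heckeInv_comp {q : F} {N : Type*} [AddCommGroup N] [Module F N] {f : M →ₗ[F] N}
    {A : Module.End F M} {B : Module.End F N}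
    (hf : f ∘ₗ (A : M →ₗ[F] M) = (B : N →ₗ[F] N) ∘ₗ f) :
    f ∘ₗ (heckeInv q A : M →ₗ[F] M) = (heckeInv q B : N →ₗ[F] N) ∘ₗ f := by
  have hfx : ∀ x, f (A x) = B (f x) := fun x => by
    simpa using LinearMap.congr_fun hf x
  ext x
  simp [heckeInv, hfx x]

lemma TdownTo1_succ {M₀ : Type*} [Monoid M₀] (f : ℕ → M₀) (n : ℕ) :
    TdownTo1 f (n + 2) = f (n + 1) * TdownTo1 f (n + 1) := rfl

lemma TdownTo1_comm {M₀ : Type*} [Monoid M₀] (f : ℕ → M₀) (a : M₀) :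
    ∀ n, (∀ i, 1 ≤ i → i + 1 ≤ n → f i * a = a * f i) →
      TdownTo1 f n * a = a * TdownTo1 f n
  | 0, _ => by simp [TdownTo1]
  | 1, _ => by simp [TdownTo1]
  | n + 2, hc => by
    rw [TdownTo1_succ, mul_assoc,
      TdownTo1_comm f a (n + 1) (fun i h1 h2 => hc i h1 (by omega)),
      ← mul_assoc, hc (n + 1) (by omega) (by omega), mul_assoc]

lemma TdownTo1_shift {M₀ : Type*} [Monoid M₀] (f : ℕ → M₀) :
    ∀ n, TdownTo1 f (n + 2) = TdownTo1 (fun i => f (i + 1)) (n + 1) * f 1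
  | 0 => by simp [TdownTo1]
  | n + 1 => by
    rw [TdownTo1_succ, TdownTo1_shift f n, ← mul_assoc]
    rfl

end Basics
section Pure
variable {F : Type*} [Field F] {Q : F} {V : ℕ → Type*} [∀ k, AddCommGroup (V k)]
  [∀ k, Module F (V k)] {S : ∀ k, ℕ → Module.End F (V k)}
  {dm : ∀ k, V (k + 1) →ₗ[F] V k} {dp : ∀ k, V k →ₗ[F] V (k + 1)}

lemma cInv_succ {Q : F} (hq : Q ≠ 0) (m : ℕ) :
    (Q ^ (m + 1) * (Q - 1))⁻¹ * Q = (Q ^ m * (Q - 1))⁻¹ := by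
  rw [pow_succ, mul_right_comm, mul_inv, mul_assoc, inv_mul_cancel₀ hq, mul_one]

lemma distComm (hA : AqRel Q V S dm dp) (K n j : ℕ) (h1 : n + 1 ≤ j) (h2 : j + 1 ≤ K) :
    S K j * TdownTo1 (S K) n = TdownTo1 (S K) n * S K j :=
  (TdownTo1_comm (S K) (S K j) n (fun i hi hin =>
    hA.2.2.1 K i j hi (by omega) (by omega) h2 (by omega))).symm

lemma braid_shuffle (hA : AqRel Q V S dm dp) (K : ℕ) :
    ∀ d i, 1 ≤ i → i + 2 + d ≤ K →
      S K i * TdownTo1 (S K) (i + 2 + d) = TdownTo1 (S K) (i + 2 + d) * S K (i + 1) := by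
  intro d
  induction d with
  | zero =>
    intro i h1 hK
    obtain ⟨a, rfl⟩ : ∃ a, i = a + 1 := ⟨i - 1, by omega⟩
    have hb := hA.2.1 K (a + 1) (by omega) (by omega)
    have hd := distComm hA K (a + 1) (a + 2) (by omega) (by omega)
    show S K (a + 1) * TdownTo1 (S K) (a + 1 + 2) = TdownTo1 (S K) (a + 1 + 2) * S K (a + 2)
    rw [TdownTo1_succ, show a + 1 + 1 = a + 2 from rfl, TdownTo1_succ]
    calc S K (a+1) * (S K (a+2) * (S K (a+1) * TdownTo1 (S K) (a+1)))
        = S K (a+1) * S K (a+2) * S K (a+1) * TdownTo1 (S K) (a+1) := by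
          simp only [mul_assoc]
      _ = S K (a+2) * S K (a+1) * S K (a+2) * TdownTo1 (S K) (a+1) := by rw [hb]
      _ = S K (a+2) * (S K (a+1) * (S K (a+2) * TdownTo1 (S K) (a+1))) := by
          simp only [mul_assoc]
      _ = S K (a+2) * (S K (a+1) * (TdownTo1 (S K) (a+1) * S K (a+2))) := by rw [hd]
      _ = S K (a+2) * (S K (a+1) * TdownTo1 (S K) (a+1)) * S K (a+2) := by
          simp only [mul_assoc]
  | succ d ih =>
    intro i h1 hK
    have e : i + 2 + (d + 1) = (i + d + 1) + 2 := by omega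
    rw [e, TdownTo1_succ, show i + d + 1 + 1 = i + 2 + d by omega]
    have hdist : S K i * S K (i + 2 + d) = S K (i + 2 + d) * S K i :=
      hA.2.2.1 K i (i + 2 + d) h1 (by omega) (by omega) (by omega) (by omega)
    calc S K i * (S K (i + 2 + d) * TdownTo1 (S K) (i + 2 + d))
        = S K i * S K (i + 2 + d) * TdownTo1 (S K) (i + 2 + d) := by rw [mul_assoc]
      _ = S K (i + 2 + d) * S K i * TdownTo1 (S K) (i + 2 + d) := by rw [hdist]
      _ = S K (i + 2 + d) * (S K i * TdownTo1 (S K) (i + 2 + d)) := by rw [mul_assoc]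
      _ = S K (i + 2 + d) * (TdownTo1 (S K) (i + 2 + d) * S K (i + 1)) := by
          rw [ih i h1 (by omega)]
      _ = S K (i + 2 + d) * TdownTo1 (S K) (i + 2 + d) * S K (i + 1) := by rw [mul_assoc]

lemma shift_commDD (hA : AqRel Q V S dm dp) (m i : ℕ) (h1 : 1 ≤ i) (h2 : i ≤ m) :
    S (m + 2) (i + 1) * commDD V dm dp (m + 1) = commDD V dm dp (m + 1) * S (m + 2) i := by
  obtain ⟨hR1, hR2, hR3, hR4, hR5, hR6, hR7, hR8, hR9⟩ := hA
  have h5a : ∀ x, S (m + 1) i (dm (m + 1) x) = dm (m + 1) (S (m + 2) i x) := fun x => by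
    simpa using LinearMap.congr_fun (hR5 m i h1 h2) x
  have h5b : ∀ x, S (m + 2) (i + 1) (dm (m + 2) x) = dm (m + 2) (S (m + 3) (i + 1) x) :=
    fun x => by simpa using LinearMap.congr_fun (hR5 (m + 1) (i + 1) (by omega) (by omega)) x
  have h7a : ∀ x, dp (m + 1) (S (m + 1) i x) = S (m + 2) (i + 1) (dp (m + 1) x) := fun x => by
    simpa using LinearMap.congr_fun (hR7 m i h1 h2) x
  have h7b : ∀ x, dp (m + 2) (S (m + 2) i x) = S (m + 3) (i + 1) (dp (m + 2) x) := fun x => by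
    simpa using LinearMap.congr_fun (hR7 (m + 1) i h1 (by omega)) x
  ext x
  simp only [commDD, Module.End.mul_apply, LinearMap.sub_apply, LinearMap.comp_apply, map_sub]
  rw [← h7a, h5a, h5b, ← h7b]

lemma S_comm_yOp1 (hA : AqRel Q V S dm dp) (m i : ℕ) (h1 : 1 ≤ i) (h2 : i ≤ m) :
    S (m + 2) (i + 1) * yOp Q V S dm dp (m + 1) 1 =
      yOp Q V S dm dp (m + 1) 1 * S (m + 2) (i + 1) := by
  have hy : yOp Q V S dm dp (m + 1) 1 = (Q ^ (m+1) * (Q - 1))⁻¹ •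
      (commDD V dm dp (m + 1) * TdownTo1 (S (m + 2)) (m + 2)) := rfl
  have hbr : S (m + 2) i * TdownTo1 (S (m + 2)) (m + 2) =
      TdownTo1 (S (m + 2)) (m + 2) * S (m + 2) (i + 1) := by
    have := braid_shuffle hA (m + 2) (m - i) i h1 (by omega)
    rwa [show i + 2 + (m - i) = m + 2 by omega] at this
  rw [hy, mul_smul_comm, smul_mul_assoc, ← mul_assoc, shift_commDD hA m i h1 h2,
    mul_assoc, hbr, ← mul_assoc]

lemma dm_comp_tau (hA : AqRel Q V S dm dp) (m : ℕ) :
    ∀ n, n ≤ m + 1 →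
      dm (m + 1) ∘ₗ (TdownTo1 (S (m + 2)) n : V (m + 2) →ₗ[F] V (m + 2)) =
        (TdownTo1 (S (m + 1)) n : V (m + 1) →ₗ[F] V (m + 1)) ∘ₗ dm (m + 1)
  | 0, _ => by
    show dm (m+1) ∘ₗ (1 : Module.End F (V (m+2))) = (1 : Module.End F (V (m+1))) ∘ₗ dm (m+1)
    rfl
  | 1, _ => by
    show dm (m+1) ∘ₗ (1 : Module.End F (V (m+2))) = (1 : Module.End F (V (m+1))) ∘ₗ dm (m+1)
    rfl
  | n + 2, hn => by
    have ih := dm_comp_tau hA m (n + 1) (by omega)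
    have ihx : ∀ x, dm (m+1) (TdownTo1 (S (m+2)) (n+1) x)
        = TdownTo1 (S (m+1)) (n+1) (dm (m+1) x) := fun x => by
      simpa using LinearMap.congr_fun ih x
    have h5 : ∀ x, S (m + 1) (n+1) (dm (m + 1) x) = dm (m + 1) (S (m + 2) (n+1) x) := fun x => by
      simpa using LinearMap.congr_fun (hA.2.2.2.2.1 m (n+1) (by omega) (by omega)) x
    ext x
    simp only [TdownTo1_succ, LinearMap.comp_apply, Module.End.mul_apply]
    rw [← h5, ihx]

lemma shift_tau_comp_dp (hA : AqRel Q V S dm dp) (m : ℕ) :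
    ∀ n, n ≤ m + 1 →
      (TdownTo1 (fun i => S (m + 2) (i + 1)) n : V (m + 2) →ₗ[F] V (m + 2)) ∘ₗ dp (m + 1) =
        dp (m + 1) ∘ₗ (TdownTo1 (S (m + 1)) n : V (m + 1) →ₗ[F] V (m + 1))
  | 0, _ => by
    show (1 : Module.End F (V (m+2))) ∘ₗ dp (m+1) = dp (m+1) ∘ₗ (1 : Module.End F (V (m+1)))
    rfl
  | 1, _ => by
    show (1 : Module.End F (V (m+2))) ∘ₗ dp (m+1) = dp (m+1) ∘ₗ (1 : Module.End F (V (m+1)))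
    rfl
  | n + 2, hn => by
    have ih := shift_tau_comp_dp hA m (n + 1) (by omega)
    have ihx : ∀ x, TdownTo1 (fun i => S (m+2) (i+1)) (n+1) (dp (m+1) x)
        = dp (m+1) (TdownTo1 (S (m+1)) (n+1) x) := fun x => by
      simpa using LinearMap.congr_fun ih x
    have h7 : ∀ x, dp (m + 1) (S (m + 1) (n + 1) x) = S (m + 2) (n + 2) (dp (m + 1) x) :=
      fun x => by
        simpa using LinearMap.congr_fun (hA.2.2.2.2.2.2.1 m (n+1) (by omega) (by omega)) x
    ext x
    simp only [TdownTo1_succ, LinearMap.comp_apply, Module.End.mul_apply]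
    rw [ihx, ← h7]

lemma dm_comp_y (hA : AqRel Q V S dm dp) (hq : Q ≠ 0) (m : ℕ) :
    ∀ i, 1 ≤ i → i ≤ m + 1 →
      dm (m + 1) ∘ₗ (yOp Q V S dm dp (m + 1) i : V (m + 2) →ₗ[F] V (m + 2)) =
        (yOp Q V S dm dp m i : V (m + 1) →ₗ[F] V (m + 1)) ∘ₗ dm (m + 1)
  | 0, h0, _ => by omega
  | 1, _, _ => by
    have h8 : ∀ v, dm (m+1) (commDD V dm dp (m+1) (S (m+2) (m+1) v))
        = Q • commDD V dm dp m (dm (m+1) v) := fun v => by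
      simpa using LinearMap.congr_fun (hA.2.2.2.2.2.2.2.1 m) v
    have htau : ∀ v, dm (m+1) (TdownTo1 (S (m+2)) (m+1) v)
        = TdownTo1 (S (m+1)) (m+1) (dm (m+1) v) := fun v => by
      simpa using LinearMap.congr_fun (dm_comp_tau hA m (m+1) (le_refl _)) v
    have hy2 : yOp Q V S dm dp (m+1) 1 = (Q ^ (m+1) * (Q - 1))⁻¹ •
        (commDD V dm dp (m+1) * (S (m+2) (m+1) * TdownTo1 (S (m+2)) (m+1))) := rfl
    have hy1 : yOp Q V S dm dp m 1 = (Q ^ m * (Q - 1))⁻¹ •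
        (commDD V dm dp m * TdownTo1 (S (m+1)) (m+1)) := rfl
    ext x
    rw [hy1, hy2]
    simp only [LinearMap.comp_apply, LinearMap.smul_apply, Module.End.mul_apply, map_smul]
    rw [h8, htau, smul_smul, cInv_succ hq m]
  | i + 2, _, hile => by
    have ih := dm_comp_y hA hq m (i + 1) (by omega) (by omega)
    have ihx : ∀ x, dm (m+1) (yOp Q V S dm dp (m+1) (i+1) x)
        = yOp Q V S dm dp m (i+1) (dm (m+1) x) := fun x => by
      simpa using LinearMap.congr_fun ih x
    have h5 : dm (m + 1) ∘ₗ (S (m+2) (i+1) : V (m+2) →ₗ[F] V (m+2))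
        = (S (m+1) (i+1) : V (m+1) →ₗ[F] V (m+1)) ∘ₗ dm (m + 1) :=
      (hA.2.2.2.2.1 m (i+1) (by omega) (by omega)).symm
    have h5' : ∀ x, dm (m+1) (heckeInv Q (S (m+2) (i+1)) x)
        = heckeInv Q (S (m+1) (i+1)) (dm (m+1) x) := fun x => by
      simpa using LinearMap.congr_fun (heckeInv_comp (q := Q) h5) x
    have hy2 : yOp Q V S dm dp (m+1) (i+2) = Q • (heckeInv Q (S (m+2) (i+1)) *
        yOp Q V S dm dp (m+1) (i+1) * heckeInv Q (S (m+2) (i+1))) := rfl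
    have hy1 : yOp Q V S dm dp m (i+2) = Q • (heckeInv Q (S (m+1) (i+1)) *
        yOp Q V S dm dp m (i+1) * heckeInv Q (S (m+1) (i+1))) := rfl
    ext x
    rw [hy1, hy2]
    simp only [LinearMap.comp_apply, LinearMap.smul_apply, Module.End.mul_apply, map_smul]
    rw [h5', ihx, h5']

lemma yOp1_hecke_comp_dp (hA : AqRel Q V S dm dp) (hq : Q ≠ 0) (m : ℕ) :
    ((yOp Q V S dm dp (m + 1) 1 * heckeInv Q (S (m + 2) 1) : Module.End F (V (m + 2))) :
        V (m + 2) →ₗ[F] V (m + 2)) ∘ₗ dp (m + 1) =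
      ((heckeInv Q (S (m + 2) 1) : Module.End F (V (m + 2))) : V (m + 2) →ₗ[F] V (m + 2)) ∘ₗ
        dp (m + 1) ∘ₗ (yOp Q V S dm dp m 1 : V (m + 1) →ₗ[F] V (m + 1)) := by
  have hqr := hA.1 (m + 2) 1 (le_refl _) (by omega)
  have hiv1 : ∀ v, S (m+2) 1 (heckeInv Q (S (m+2) 1) v) = v := fun v => by
    simpa using LinearMap.congr_fun (self_mul_heckeInv hq hqr) v
  have hiv2 : ∀ v, heckeInv Q (S (m+2) 1) (S (m+2) 1 v) = v := fun v => by
    simpa using LinearMap.congr_fun (heckeInv_mul_self hq hqr) v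
  have h9 : ∀ v, S (m+2) 1 (commDD V dm dp (m+1) (dp (m+1) v))
      = Q • dp (m+1) (commDD V dm dp m v) := fun v => by
    simpa using LinearMap.congr_fun (hA.2.2.2.2.2.2.2.2 m) v
  have hphi : ∀ v, commDD V dm dp (m+1) (dp (m+1) v)
      = Q • heckeInv Q (S (m+2) 1) (dp (m+1) (commDD V dm dp m v)) := fun v => by
    rw [← map_smul, ← h9, hiv2]
  have htau : ∀ v, TdownTo1 (fun i => S (m+2) (i+1)) (m+1) (dp (m+1) v)
      = dp (m+1) (TdownTo1 (S (m+1)) (m+1) v) := fun v => by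
    simpa using LinearMap.congr_fun (shift_tau_comp_dp hA m (m+1) (le_refl _)) v
  have hshift : ∀ v, TdownTo1 (S (m+2)) (m+2) v
      = TdownTo1 (fun i => S (m+2) (i+1)) (m+1) (S (m+2) 1 v) := fun v => by
    rw [TdownTo1_shift (S (m+2)) m]; rfl
  have hy2 : yOp Q V S dm dp (m+1) 1 = (Q ^ (m+1) * (Q - 1))⁻¹ •
      (commDD V dm dp (m+1) * TdownTo1 (S (m+2)) (m+2)) := rfl
  have hy1 : yOp Q V S dm dp m 1 = (Q ^ m * (Q - 1))⁻¹ •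
      (commDD V dm dp m * TdownTo1 (S (m+1)) (m+1)) := rfl
  ext x
  rw [hy1, hy2]
  simp only [LinearMap.comp_apply, LinearMap.smul_apply, Module.End.mul_apply, map_smul]
  rw [hshift, hiv1, htau, hphi, smul_smul, cInv_succ hq m]

lemma dp_comp_yOp1 (hA : AqRel Q V S dm dp) (hq : Q ≠ 0) (m : ℕ) :
    dp (m + 1) ∘ₗ (yOp Q V S dm dp m 1 : V (m + 1) →ₗ[F] V (m + 1)) =
      ((S (m + 2) 1 * yOp Q V S dm dp (m + 1) 1 * heckeInv Q (S (m + 2) 1) :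
        Module.End F (V (m + 2))) : V (m + 2) →ₗ[F] V (m + 2)) ∘ₗ dp (m + 1) := by
  have hqr := hA.1 (m + 2) 1 (le_refl _) (by omega)
  have hiv1 : ∀ v, S (m+2) 1 (heckeInv Q (S (m+2) 1) v) = v := fun v => by
    simpa using LinearMap.congr_fun (self_mul_heckeInv hq hqr) v
  have h9 : ∀ v, S (m+2) 1 (commDD V dm dp (m+1) (dp (m+1) v))
      = Q • dp (m+1) (commDD V dm dp m v) := fun v => by
    simpa using LinearMap.congr_fun (hA.2.2.2.2.2.2.2.2 m) v
  have hphi2 : ∀ v, dp (m+1) (commDD V dm dp m v)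
      = Q⁻¹ • S (m+2) 1 (commDD V dm dp (m+1) (dp (m+1) v)) := fun v => by
    rw [h9, smul_smul, inv_mul_cancel₀ hq, one_smul]
  have htau : ∀ v, TdownTo1 (fun i => S (m+2) (i+1)) (m+1) (dp (m+1) v)
      = dp (m+1) (TdownTo1 (S (m+1)) (m+1) v) := fun v => by
    simpa using LinearMap.congr_fun (shift_tau_comp_dp hA m (m+1) (le_refl _)) v
  have hshift : ∀ v, TdownTo1 (S (m+2)) (m+2) v
      = TdownTo1 (fun i => S (m+2) (i+1)) (m+1) (S (m+2) 1 v) := fun v => by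
    rw [TdownTo1_shift (S (m+2)) m]; rfl
  have hy2 : yOp Q V S dm dp (m+1) 1 = (Q ^ (m+1) * (Q - 1))⁻¹ •
      (commDD V dm dp (m+1) * TdownTo1 (S (m+2)) (m+2)) := rfl
  have hy1 : yOp Q V S dm dp m 1 = (Q ^ m * (Q - 1))⁻¹ •
      (commDD V dm dp m * TdownTo1 (S (m+1)) (m+1)) := rfl
  have hc : (Q ^ m * (Q - 1))⁻¹ * Q⁻¹ = (Q ^ (m+1) * (Q - 1))⁻¹ := by
    rw [← cInv_succ hq m, mul_assoc, mul_inv_cancel₀ hq, mul_one]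
  ext x
  rw [hy1, hy2]
  simp only [LinearMap.comp_apply, LinearMap.smul_apply, Module.End.mul_apply, map_smul]
  rw [hphi2, ← htau, hshift, hiv1, smul_smul, hc]

end Pure
section Mixed
variable {F : Type*} [Field F] {q t : F} {V : ℕ → Type*} [∀ k, AddCommGroup (V k)]
  [∀ k, Module F (V k)] {T : ∀ k, ℕ → Module.End F (V k)}
  {dm : ∀ k, V (k + 1) →ₗ[F] V k} {dp dps : ∀ k, V k →ₗ[F] V (k + 1)}

lemma zOp_eq_yOp (hq : q ≠ 0) (m : ℕ) :
    ∀ i, zOp q V T dm dps m i =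
      yOp q⁻¹ V (fun k j => heckeInv q (T k j)) dm dps m i
  | 0 => rfl
  | 1 => by
    have e : ((q⁻¹) ^ m * (q⁻¹ - 1))⁻¹ = q ^ (m + 1) / (1 - q) := by
      have h1 : q⁻¹ - 1 = q⁻¹ * (1 - q) := by
        field_simp
      rw [h1, ← mul_assoc, ← pow_succ, mul_inv, inv_pow, inv_inv, div_eq_mul_inv]
    show (q ^ (m + 1) / (1 - q)) •
        (commDD V dm dps m * TdownTo1 (fun i => heckeInv q (T (m + 1) i)) (m + 1)) =
      ((q⁻¹) ^ m * (q⁻¹ - 1))⁻¹ •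
        (commDD V dm dps m * TdownTo1 (fun i => heckeInv q (T (m + 1) i)) (m + 1))
    rw [e]
  | i + 2 => by
    show q⁻¹ • (T (m + 1) (i + 1) * zOp q V T dm dps m (i + 1) * T (m + 1) (i + 1)) =
      q⁻¹ • (heckeInv q⁻¹ (heckeInv q (T (m + 1) (i + 1))) *
        yOp q⁻¹ V (fun k j => heckeInv q (T k j)) dm dps m (i + 1) *
        heckeInv q⁻¹ (heckeInv q (T (m + 1) (i + 1))))
    rw [heckeInv_heckeInv hq, zOp_eq_yOp hq m (i + 1)]

lemma dm_comp_z (h : CorrectlyIntertwined q t V T dm dp dps) (hq : q ≠ 0) (m i : ℕ)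
    (h1 : 1 ≤ i) (h2 : i ≤ m + 1) :
    dm (m + 1) ∘ₗ (zOp q V T dm dps (m + 1) i : V (m + 2) →ₗ[F] V (m + 2)) =
      (zOp q V T dm dps m i : V (m + 1) →ₗ[F] V (m + 1)) ∘ₗ dm (m + 1) := by
  rw [zOp_eq_yOp hq (m + 1) i, zOp_eq_yOp hq m i]
  exact dm_comp_y h.2.1 (inv_ne_zero hq) m i h1 h2

lemma T_comm_z1 (h : CorrectlyIntertwined q t V T dm dp dps) (hq : q ≠ 0) (m i : ℕ)
    (h1 : 1 ≤ i) (h2 : i ≤ m) :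
    T (m + 2) (i + 1) * zOp q V T dm dps (m + 1) 1 =
      zOp q V T dm dps (m + 1) 1 * T (m + 2) (i + 1) := by
  have hs := S_comm_yOp1 h.2.1 m i h1 h2
  rw [← zOp_eq_yOp hq (m + 1) 1] at hs
  have h2' := heckeInv_comm (q := q⁻¹) hs
  rwa [heckeInv_heckeInv hq] at h2'

lemma hecke_comm_y1 (h : CorrectlyIntertwined q t V T dm dp dps) (m i : ℕ)
    (h1 : 1 ≤ i) (h2 : i ≤ m) :
    heckeInv q (T (m + 2) (i + 1)) * yOp q V T dm dp (m + 1) 1 =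
      yOp q V T dm dp (m + 1) 1 * heckeInv q (T (m + 2) (i + 1)) :=
  heckeInv_comm (S_comm_yOp1 h.1 m i h1 h2)

lemma z1_T_comp_dps (h : CorrectlyIntertwined q t V T dm dp dps) (hq : q ≠ 0) (m : ℕ) :
    ((zOp q V T dm dps (m + 1) 1 * T (m + 2) 1 : Module.End F (V (m + 2))) :
        V (m + 2) →ₗ[F] V (m + 2)) ∘ₗ dps (m + 1) =
      ((T (m + 2) 1 : Module.End F (V (m + 2))) : V (m + 2) →ₗ[F] V (m + 2)) ∘ₗ dps (m + 1) ∘ₗ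
        (zOp q V T dm dps m 1 : V (m + 1) →ₗ[F] V (m + 1)) := by
  have h0 := yOp1_hecke_comp_dp h.2.1 (inv_ne_zero hq) m
  rw [← zOp_eq_yOp hq (m + 1) 1, ← zOp_eq_yOp hq m 1] at h0
  simpa only [heckeInv_heckeInv hq] using h0

lemma dps_comp_z1 (h : CorrectlyIntertwined q t V T dm dp dps) (hq : q ≠ 0) (m : ℕ) :
    dps (m + 1) ∘ₗ (zOp q V T dm dps m 1 : V (m + 1) →ₗ[F] V (m + 1)) =
      ((heckeInv q (T (m + 2) 1) * zOp q V T dm dps (m + 1) 1 * T (m + 2) 1 :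
        Module.End F (V (m + 2))) : V (m + 2) →ₗ[F] V (m + 2)) ∘ₗ dps (m + 1) := by
  have h0 := dp_comp_yOp1 h.2.1 (inv_ne_zero hq) m
  rw [← zOp_eq_yOp hq (m + 1) 1, ← zOp_eq_yOp hq m 1] at h0
  simpa only [heckeInv_heckeInv hq] using h0

lemma commDD_mul_z1 (h : CorrectlyIntertwined q t V T dm dp dps) (hq : q ≠ 0) (m : ℕ) :
    commDD V dm dp (m + 1) * zOp q V T dm dps (m + 1) 1 =
      zOp q V T dm dps (m + 1) 2 * commDD V dm dp (m + 1) := by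
  have hI1a : ∀ v, dp (m + 1) (zOp q V T dm dps m 1 v) =
      zOp q V T dm dps (m + 1) 2 (dp (m + 1) v) := fun v => by
    simpa using LinearMap.congr_fun (h.2.2.1 m 1 (le_refl _) (by omega)) v
  have hI1b : ∀ v, dp (m + 2) (zOp q V T dm dps (m + 1) 1 v) =
      zOp q V T dm dps (m + 2) 2 (dp (m + 2) v) := fun v => by
    simpa using LinearMap.congr_fun (h.2.2.1 (m + 1) 1 (le_refl _) (by omega)) v
  have hz1 : ∀ v, dm (m + 1) (zOp q V T dm dps (m + 1) 1 v) =
      zOp q V T dm dps m 1 (dm (m + 1) v) := fun v => by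
    simpa using LinearMap.congr_fun (dm_comp_z h hq m 1 (le_refl _) (by omega)) v
  have hz2 : ∀ v, dm (m + 2) (zOp q V T dm dps (m + 2) 2 v) =
      zOp q V T dm dps (m + 1) 2 (dm (m + 2) v) := fun v => by
    simpa using LinearMap.congr_fun (dm_comp_z h hq (m + 1) 2 (by omega) (by omega)) v
  ext x
  simp only [commDD, Module.End.mul_apply, LinearMap.sub_apply, LinearMap.comp_apply, map_sub]
  rw [hz1, hI1a, hI1b, hz2]

lemma commDDs_mul_y1 (h : CorrectlyIntertwined q t V T dm dp dps) (hq : q ≠ 0) (m : ℕ) :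
    commDD V dm dps (m + 1) * yOp q V T dm dp (m + 1) 1 =
      yOp q V T dm dp (m + 1) 2 * commDD V dm dps (m + 1) := by
  have hI2a : ∀ v, dps (m + 1) (yOp q V T dm dp m 1 v) =
      yOp q V T dm dp (m + 1) 2 (dps (m + 1) v) := fun v => by
    simpa using LinearMap.congr_fun (h.2.2.2.1 m 1 (le_refl _) (by omega)) v
  have hI2b : ∀ v, dps (m + 2) (yOp q V T dm dp (m + 1) 1 v) =
      yOp q V T dm dp (m + 2) 2 (dps (m + 2) v) := fun v => by
    simpa using LinearMap.congr_fun (h.2.2.2.1 (m + 1) 1 (le_refl _) (by omega)) v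
  have hy1 : ∀ v, dm (m + 1) (yOp q V T dm dp (m + 1) 1 v) =
      yOp q V T dm dp m 1 (dm (m + 1) v) := fun v => by
    simpa using LinearMap.congr_fun (dm_comp_y h.1 hq m 1 (le_refl _) (by omega)) v
  have hy2 : ∀ v, dm (m + 2) (yOp q V T dm dp (m + 2) 2 v) =
      yOp q V T dm dp (m + 1) 2 (dm (m + 2) v) := fun v => by
    simpa using LinearMap.congr_fun (dm_comp_y h.1 hq (m + 1) 2 (by omega) (by omega)) v
  ext x
  simp only [commDD, Module.End.mul_apply, LinearMap.sub_apply, LinearMap.comp_apply, map_sub]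
  rw [hy1, hI2a, hI2b, hy2]

lemma T_mul_y2 (h : CorrectlyIntertwined q t V T dm dp dps) (hq : q ≠ 0) (m : ℕ) :
    T (m + 2) 1 * yOp q V T dm dp (m + 1) 2 =
      q • (yOp q V T dm dp (m + 1) 1 * heckeInv q (T (m + 2) 1)) := by
  have hqr := h.1.1 (m + 2) 1 (le_refl _) (by omega)
  show T (m + 2) 1 * (q • (heckeInv q (T (m + 2) 1) * yOp q V T dm dp (m + 1) 1 *
      heckeInv q (T (m + 2) 1))) = _
  rw [mul_smul_comm, ← mul_assoc, ← mul_assoc, self_mul_heckeInv hq hqr, one_mul]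

lemma z2_mul_y1 (h : CorrectlyIntertwined q t V T dm dp dps) (hq : q ≠ 0) (m : ℕ) :
    zOp q V T dm dps (m + 1) 2 * yOp q V T dm dp (m + 1) 1 =
      q⁻¹ • (T (m + 2) 1 * (yOp q V T dm dp (m + 1) 2 *
        (zOp q V T dm dps (m + 1) 1 * T (m + 2) 1))) := by
  have hqr := h.1.1 (m + 2) 1 (le_refl _) (by omega)
  have hzt : zOp q V T dm dps (m + 1) 1 * T (m + 2) 1
      = (q ^ (m + 2) / (1 - q)) • (commDD V dm dps (m + 1) *
        TdownTo1 (fun i => heckeInv q (T (m + 2) (i + 1))) (m + 1)) := by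
    have hsh : TdownTo1 (fun i => heckeInv q (T (m + 2) i)) (m + 2)
        = TdownTo1 (fun i => heckeInv q (T (m + 2) (i + 1))) (m + 1) *
          heckeInv q (T (m + 2) 1) := TdownTo1_shift (fun i => heckeInv q (T (m + 2) i)) m
    show ((q ^ (m + 2) / (1 - q)) • (commDD V dm dps (m + 1) *
        TdownTo1 (fun i => heckeInv q (T (m + 2) i)) (m + 2))) * T (m + 2) 1 = _
    rw [hsh]
    simp only [smul_mul_assoc, mul_assoc, heckeInv_mul_self hq hqr, mul_one]
  have hcy : TdownTo1 (fun i => heckeInv q (T (m + 2) (i + 1))) (m + 1) *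
      yOp q V T dm dp (m + 1) 1 = yOp q V T dm dp (m + 1) 1 *
      TdownTo1 (fun i => heckeInv q (T (m + 2) (i + 1))) (m + 1) :=
    TdownTo1_comm _ _ (m + 1) (fun i h1 h2 => hecke_comm_y1 h m i h1 (by omega))
  have hphiy := commDDs_mul_y1 h hq m
  have hZAY : (zOp q V T dm dps (m + 1) 1 * T (m + 2) 1) * yOp q V T dm dp (m + 1) 1
      = yOp q V T dm dp (m + 1) 2 * (zOp q V T dm dps (m + 1) 1 * T (m + 2) 1) := by
    rw [hzt, smul_mul_assoc, mul_smul_comm, mul_assoc, hcy, ← mul_assoc, hphiy, mul_assoc]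
  calc zOp q V T dm dps (m + 1) 2 * yOp q V T dm dp (m + 1) 1
      = q⁻¹ • (T (m + 2) 1 * ((zOp q V T dm dps (m + 1) 1 * T (m + 2) 1) *
          yOp q V T dm dp (m + 1) 1)) := by
        show (q⁻¹ • (T (m + 2) 1 * zOp q V T dm dps (m + 1) 1 * T (m + 2) 1)) *
          yOp q V T dm dp (m + 1) 1 = _
        simp only [smul_mul_assoc, mul_assoc]
    _ = q⁻¹ • (T (m + 2) 1 * (yOp q V T dm dp (m + 1) 2 *
          (zOp q V T dm dps (m + 1) 1 * T (m + 2) 1))) := by rw [hZAY]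

lemma zz_comm_comp_dp (h : CorrectlyIntertwined q t V T dm dp dps) (hq : q ≠ 0) (m : ℕ) :
    ((zOp q V T dm dps (m + 1) 1 * zOp q V T dm dps (m + 1) 2 : Module.End F (V (m + 2))) :
      V (m + 2) →ₗ[F] V (m + 2)) ∘ₗ dp (m + 1) =
      ((zOp q V T dm dps (m + 1) 2 * zOp q V T dm dps (m + 1) 1 : Module.End F (V (m + 2))) :
        V (m + 2) →ₗ[F] V (m + 2)) ∘ₗ dp (m + 1) := by
  have hqr := h.1.1 (m + 2) 1 (le_refl _) (by omega)
  have hI1 : ∀ v, dp (m + 1) (zOp q V T dm dps m 1 v) =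
      zOp q V T dm dps (m + 1) 2 (dp (m + 1) v) := fun v => by
    simpa using LinearMap.congr_fun (h.2.2.1 m 1 (le_refl _) (by omega)) v
  have hI3 : ∀ v, zOp q V T dm dps (m + 1) 1 (dp (m + 1) v) =
      (-(t * q ^ (m + 2))) • yOp q V T dm dp (m + 1) 1 (dps (m + 1) v) := fun v => by
    simpa using LinearMap.congr_fun (h.2.2.2.2 (m + 1)) v
  have hF7x : ∀ v, zOp q V T dm dps (m + 1) 2 (yOp q V T dm dp (m + 1) 1 v) =
      q⁻¹ • T (m + 2) 1 (yOp q V T dm dp (m + 1) 2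
        (zOp q V T dm dps (m + 1) 1 (T (m + 2) 1 v))) := fun v => by
    simpa using LinearMap.congr_fun (z2_mul_y1 h hq m) v
  have hF8x : ∀ v, zOp q V T dm dps (m + 1) 1 (T (m + 2) 1 (dps (m + 1) v)) =
      T (m + 2) 1 (dps (m + 1) (zOp q V T dm dps m 1 v)) := fun v => by
    simpa using LinearMap.congr_fun (z1_T_comp_dps h hq m) v
  have hTy : ∀ v, T (m + 2) 1 (yOp q V T dm dp (m + 1) 2 v) =
      q • yOp q V T dm dp (m + 1) 1 (heckeInv q (T (m + 2) 1) v) := fun v => by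
    simpa using LinearMap.congr_fun (T_mul_y2 h hq m) v
  have hIv : ∀ v, heckeInv q (T (m + 2) 1) (T (m + 2) 1 v) = v := fun v => by
    simpa using LinearMap.congr_fun (heckeInv_mul_self hq hqr) v
  ext x
  simp only [Module.End.mul_apply, LinearMap.comp_apply]
  rw [← hI1, hI3, hI3, map_smul, hF7x, hF8x, hTy, hIv]
  rw [smul_smul, smul_smul, mul_assoc, inv_mul_cancel₀ hq, mul_one]

lemma zz_comm_comp_dp' (h : CorrectlyIntertwined q t V T dm dp dps) (hq : q ≠ 0) (m : ℕ) :
    ∀ i, i + 2 ≤ m + 2 →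
      ((zOp q V T dm dps (m + 1) 1 * zOp q V T dm dps (m + 1) (i + 2) :
        Module.End F (V (m + 2))) : V (m + 2) →ₗ[F] V (m + 2)) ∘ₗ dp (m + 1) =
      ((zOp q V T dm dps (m + 1) (i + 2) * zOp q V T dm dps (m + 1) 1 :
        Module.End F (V (m + 2))) : V (m + 2) →ₗ[F] V (m + 2)) ∘ₗ dp (m + 1)
  | 0, _ => zz_comm_comp_dp h hq m
  | i + 1, hle => by
    have ih := zz_comm_comp_dp' h hq m i (by omega)
    have ihx : ∀ v, zOp q V T dm dps (m + 1) 1 (zOp q V T dm dps (m + 1) (i + 2)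
        (dp (m + 1) v)) = zOp q V T dm dps (m + 1) (i + 2)
        (zOp q V T dm dps (m + 1) 1 (dp (m + 1) v)) := fun v => by
      simpa using LinearMap.congr_fun ih v
    have h7 : ∀ v, dp (m + 1) (T (m + 1) (i + 1) v) = T (m + 2) (i + 2) (dp (m + 1) v) :=
      fun v => by
        simpa using LinearMap.congr_fun
          (h.1.2.2.2.2.2.2.1 m (i + 1) (by omega) (by omega)) v
    have hTz : ∀ v, T (m + 2) (i + 2) (zOp q V T dm dps (m + 1) 1 v) =
        zOp q V T dm dps (m + 1) 1 (T (m + 2) (i + 2) v) := fun v => by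
      simpa using LinearMap.congr_fun (T_comm_z1 h hq m (i + 1) (by omega) (by omega)) v
    have hz : zOp q V T dm dps (m + 1) (i + 3) = q⁻¹ • (T (m + 2) (i + 2) *
        zOp q V T dm dps (m + 1) (i + 2) * T (m + 2) (i + 2)) := rfl
    ext x
    simp only [Module.End.mul_apply, LinearMap.comp_apply, hz, LinearMap.smul_apply, map_smul]
    rw [hTz, ← h7, ← hTz, ihx]

end Mixed
/-- The replicated raising operator `D₊ = −(qt)⁻¹ z₁ d₊`. -/
def DpOp {F : Type*} [Field F] (q t : F) (V : ℕ → Type*) [∀ k, AddCommGroup (V k)]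
    [∀ k, Module F (V k)] (T : ∀ k, ℕ → Module.End F (V k))
    (dm : ∀ k, V (k + 1) →ₗ[F] V k) (dp dps : ∀ k, V k →ₗ[F] V (k + 1)) :
    ∀ k, V k →ₗ[F] V (k + 1) :=
  fun k => (-(q * t)⁻¹) • ((zOp q V T dm dps k 1 : V (k + 1) →ₗ[F] V (k + 1)) ∘ₗ dp k)

section Dp
variable {F : Type*} [Field F] {q t : F} {V : ℕ → Type*} [∀ k, AddCommGroup (V k)]
  [∀ k, Module F (V k)] {T : ∀ k, ℕ → Module.End F (V k)}
  {dm : ∀ k, V (k + 1) →ₗ[F] V k} {dp dps : ∀ k, V k →ₗ[F] V (k + 1)}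

lemma commDD_Dp (h : CorrectlyIntertwined q t V T dm dp dps) (hq : q ≠ 0) (m : ℕ) :
    commDD V dm (DpOp q t V T dm dp dps) m =
      (-(q * t)⁻¹) • (zOp q V T dm dps m 1 * commDD V dm dp m) := by
  have hz1 : ∀ v, dm (m + 1) (zOp q V T dm dps (m + 1) 1 v) =
      zOp q V T dm dps m 1 (dm (m + 1) v) := fun v => by
    simpa using LinearMap.congr_fun (dm_comp_z h hq m 1 (le_refl _) (by omega)) v
  ext x
  simp only [commDD, DpOp, LinearMap.sub_apply, LinearMap.comp_apply, LinearMap.smul_apply,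
    Module.End.mul_apply, map_smul, map_sub]
  rw [hz1, smul_sub]

lemma Y1_eq (h : CorrectlyIntertwined q t V T dm dp dps) (hq : q ≠ 0) (m : ℕ) :
    yOp q V T dm (DpOp q t V T dm dp dps) m 1 =
      (-(q * t)⁻¹) • (zOp q V T dm dps m 1 * yOp q V T dm dp m 1) := by
  have hc := commDD_Dp h hq m
  show (q ^ m * (q - 1))⁻¹ • (commDD V dm (DpOp q t V T dm dp dps) m *
      TdownTo1 (T (m + 1)) (m + 1)) =
    (-(q * t)⁻¹) • (zOp q V T dm dps m 1 * ((q ^ m * (q - 1))⁻¹ •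
      (commDD V dm dp m * TdownTo1 (T (m + 1)) (m + 1))))
  rw [hc, smul_mul_assoc, mul_smul_comm, mul_assoc, smul_smul, smul_smul, mul_comm]

lemma dps_comp_Y (h : CorrectlyIntertwined q t V T dm dp dps) (hq : q ≠ 0) (m : ℕ) :
    ∀ i, 1 ≤ i → i ≤ m + 1 →
      dps (m + 1) ∘ₗ (yOp q V T dm (DpOp q t V T dm dp dps) m i :
          V (m + 1) →ₗ[F] V (m + 1)) =
        (yOp q V T dm (DpOp q t V T dm dp dps) (m + 1) (i + 1) :
          V (m + 2) →ₗ[F] V (m + 2)) ∘ₗ dps (m + 1)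
  | 0, h0, _ => by omega
  | 1, _, _ => by
    have hz4 : ∀ v, dps (m + 1) (zOp q V T dm dps m 1 v) = heckeInv q (T (m + 2) 1)
        (zOp q V T dm dps (m + 1) 1 (T (m + 2) 1 (dps (m + 1) v))) := fun v => by
      simpa using LinearMap.congr_fun (dps_comp_z1 h hq m) v
    have hI2 : ∀ v, dps (m + 1) (yOp q V T dm dp m 1 v) =
        yOp q V T dm dp (m + 1) 2 (dps (m + 1) v) := fun v => by
      simpa using LinearMap.congr_fun (h.2.2.2.1 m 1 (le_refl _) (by omega)) v
    have hTy : ∀ v, T (m + 2) 1 (yOp q V T dm dp (m + 1) 2 v) =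
        q • yOp q V T dm dp (m + 1) 1 (heckeInv q (T (m + 2) 1) v) := fun v => by
      simpa using LinearMap.congr_fun (T_mul_y2 h hq m) v
    have hY1a : ∀ v, yOp q V T dm (DpOp q t V T dm dp dps) m 1 v =
        (-(q * t)⁻¹) • zOp q V T dm dps m 1 (yOp q V T dm dp m 1 v) := fun v => by
      simpa using LinearMap.congr_fun (Y1_eq h hq m) v
    have hY1b : ∀ v, yOp q V T dm (DpOp q t V T dm dp dps) (m + 1) 1 v =
        (-(q * t)⁻¹) • zOp q V T dm dps (m + 1) 1 (yOp q V T dm dp (m + 1) 1 v) := fun v => by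
      simpa using LinearMap.congr_fun (Y1_eq h hq (m + 1)) v
    have hY2 : yOp q V T dm (DpOp q t V T dm dp dps) (m + 1) 2 =
        q • (heckeInv q (T (m + 2) 1) * yOp q V T dm (DpOp q t V T dm dp dps) (m + 1) 1 *
          heckeInv q (T (m + 2) 1)) := rfl
    ext x
    simp only [LinearMap.comp_apply, hY2, LinearMap.smul_apply, Module.End.mul_apply]
    rw [hY1a, hY1b]
    simp only [map_smul]
    rw [hz4, hI2, hTy]
    simp only [map_smul, smul_smul]
    match_scalars
    ring
  | i + 2, _, hle => by
    have ih := dps_comp_Y h hq m (i + 1) (by omega) (by omega)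
    have ihx : ∀ v, dps (m + 1) (yOp q V T dm (DpOp q t V T dm dp dps) m (i + 1) v) =
        yOp q V T dm (DpOp q t V T dm dp dps) (m + 1) (i + 2) (dps (m + 1) v) := fun v => by
      simpa using LinearMap.congr_fun ih v
    have hs : ∀ v, dps (m + 1) (heckeInv q (T (m + 1) (i + 1)) v) =
        heckeInv q (T (m + 2) (i + 2)) (dps (m + 1) v) := fun v => by
      simpa using LinearMap.congr_fun
        (h.2.1.2.2.2.2.2.2.1 m (i + 1) (by omega) (by omega)) v
    ext x
    show dps (m + 1) ((q • (heckeInv q (T (m + 1) (i + 1)) *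
        yOp q V T dm (DpOp q t V T dm dp dps) m (i + 1) *
        heckeInv q (T (m + 1) (i + 1)))) x) =
      (q • (heckeInv q (T (m + 2) (i + 2)) *
        yOp q V T dm (DpOp q t V T dm dp dps) (m + 1) (i + 2) *
        heckeInv q (T (m + 2) (i + 2)))) (dps (m + 1) x)
    simp only [LinearMap.smul_apply, Module.End.mul_apply, map_smul]
    rw [hs, ihx, hs]

end Dp

lemma qv_ne_zero : qv ≠ 0 := by
  rw [qv, Ne, IsFractionRing.to_map_eq_zero_iff]
  exact MvPolynomial.X_ne_zero 0
set_option maxHeartbeats 1600000 in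
/-- Replication: given correctly intertwined actions of `𝔸_q` and `𝔸_{q⁻¹}` over
`ℚ(q,t)`, the operator `D₊ := −(qt)⁻¹ z_1 d₊ : V_k → V_{k+1}` together with `T_i`, `d₋`
again satisfies the defining relations of an action of `𝔸_q`, and the pair
`(T, d₋, D₊)`, `(T⁻¹, d₋, d₊*)` is again correctly intertwined. -/
theorem replication_rho_one (V : ℕ → Type*) [∀ k, AddCommGroup (V k)]
    [∀ k, Module Fqt (V k)] (T : ∀ k, ℕ → Module.End Fqt (V k))
    (dm : ∀ k, V (k + 1) →ₗ[Fqt] V k) (dp dps : ∀ k, V k →ₗ[Fqt] V (k + 1))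
    (h : CorrectlyIntertwined qv tv V T dm dp dps) :
    AqRel qv V T dm
      (fun k => (-(qv * tv)⁻¹) •
        ((zOp qv V T dm dps k 1 : V (k + 1) →ₗ[Fqt] V (k + 1)) ∘ₗ dp k)) ∧
    IntertwineRel qv tv V T dm
      (fun k => (-(qv * tv)⁻¹) •
        ((zOp qv V T dm dps k 1 : V (k + 1) →ₗ[Fqt] V (k + 1)) ∘ₗ dp k)) dps := by
  have hq : qv ≠ 0 := qv_ne_zero
  show AqRel qv V T dm (DpOp qv tv V T dm dp dps) ∧
    IntertwineRel qv tv V T dm (DpOp qv tv V T dm dp dps) dps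
  constructor
  · refine ⟨h.1.1, h.1.2.1, h.1.2.2.1, h.1.2.2.2.1, h.1.2.2.2.2.1, ?_, ?_, ?_, ?_⟩
    · -- T₁ D₊² = D₊²
      intro m
      have hI1 : ∀ v, dp (m+1) (zOp qv V T dm dps m 1 v) =
          zOp qv V T dm dps (m+1) 2 (dp (m+1) v) := fun v => by
        simpa using LinearMap.congr_fun (h.2.2.1 m 1 (le_refl _) (by omega)) v
      have hz2 : zOp qv V T dm dps (m+1) 2
          = qv⁻¹ • (T (m+2) 1 * zOp qv V T dm dps (m+1) 1 * T (m+2) 1) := rfl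
      have hTzz : T (m+2) 1 * (zOp qv V T dm dps (m+1) 1 * zOp qv V T dm dps (m+1) 2)
          = zOp qv V T dm dps (m+1) 2 * (zOp qv V T dm dps (m+1) 1 * T (m+2) 1) := by
        rw [hz2]; simp only [mul_smul_comm, smul_mul_assoc, mul_assoc]
      have hTzzx : ∀ v, T (m+2) 1 (zOp qv V T dm dps (m+1) 1 (zOp qv V T dm dps (m+1) 2 v))
          = zOp qv V T dm dps (m+1) 2 (zOp qv V T dm dps (m+1) 1 (T (m+2) 1 v)) := fun v => by
        simpa using LinearMap.congr_fun hTzz v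
      have hR6x : ∀ v, T (m+2) 1 (dp (m+1) (dp m v)) = dp (m+1) (dp m v) := fun v => by
        simpa using LinearMap.congr_fun (h.1.2.2.2.2.2.1 m) v
      have hM7x : ∀ v, zOp qv V T dm dps (m+1) 1 (zOp qv V T dm dps (m+1) 2 (dp (m+1) v))
          = zOp qv V T dm dps (m+1) 2 (zOp qv V T dm dps (m+1) 1 (dp (m+1) v)) := fun v => by
        simpa using LinearMap.congr_fun (zz_comm_comp_dp h hq m) v
      ext x
      simp only [DpOp, LinearMap.comp_apply, LinearMap.smul_apply, map_smul]
      rw [hI1, hTzzx, hR6x, ← hM7x]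
    · -- D₊ Tᵢ = Tᵢ₊₁ D₊
      intro m i h1 h2
      have h7x : ∀ v, dp (m+1) (T (m+1) i v) = T (m+2) (i+1) (dp (m+1) v) := fun v => by
        simpa using LinearMap.congr_fun (h.1.2.2.2.2.2.2.1 m i h1 h2) v
      have hTzx : ∀ v, T (m+2) (i+1) (zOp qv V T dm dps (m+1) 1 v)
          = zOp qv V T dm dps (m+1) 1 (T (m+2) (i+1) v) := fun v => by
        simpa using LinearMap.congr_fun (T_comm_z1 h hq m i h1 h2) v
      ext x
      simp only [DpOp, LinearMap.comp_apply, LinearMap.smul_apply, map_smul]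
      rw [h7x, ← hTzx]
    · -- d₋ (D₊d₋ − d₋D₊) T = q (D₊d₋ − d₋D₊) d₋
      intro m
      have hz1 : ∀ v, dm (m+1) (zOp qv V T dm dps (m+1) 1 v) =
          zOp qv V T dm dps m 1 (dm (m+1) v) := fun v => by
        simpa using LinearMap.congr_fun (dm_comp_z h hq m 1 (le_refl _) (by omega)) v
      have hR8x : ∀ v, dm (m+1) (commDD V dm dp (m+1) (T (m+2) (m+1) v)) =
          qv • commDD V dm dp m (dm (m+1) v) := fun v => by
        simpa using LinearMap.congr_fun (h.1.2.2.2.2.2.2.2.1 m) v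
      rw [commDD_Dp h hq (m+1), commDD_Dp h hq m]
      ext x
      simp only [LinearMap.comp_apply, LinearMap.smul_apply, Module.End.mul_apply, map_smul]
      rw [hz1, hR8x]
      simp only [map_smul]
      rw [smul_comm]
    · -- T₁ (D₊d₋ − d₋D₊) D₊ = q D₊ (D₊d₋ − d₋D₊)
      intro m
      have hI1 : ∀ v, dp (m+1) (zOp qv V T dm dps m 1 v) =
          zOp qv V T dm dps (m+1) 2 (dp (m+1) v) := fun v => by
        simpa using LinearMap.congr_fun (h.2.2.1 m 1 (le_refl _) (by omega)) v
      have hM2x : ∀ v, commDD V dm dp (m+1) (zOp qv V T dm dps (m+1) 1 v) =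
          zOp qv V T dm dps (m+1) 2 (commDD V dm dp (m+1) v) := fun v => by
        simpa using LinearMap.congr_fun (commDD_mul_z1 h hq m) v
      have hz2 : zOp qv V T dm dps (m+1) 2
          = qv⁻¹ • (T (m+2) 1 * zOp qv V T dm dps (m+1) 1 * T (m+2) 1) := rfl
      have hTzz : T (m+2) 1 * (zOp qv V T dm dps (m+1) 1 * zOp qv V T dm dps (m+1) 2)
          = zOp qv V T dm dps (m+1) 2 * (zOp qv V T dm dps (m+1) 1 * T (m+2) 1) := by
        rw [hz2]; simp only [mul_smul_comm, smul_mul_assoc, mul_assoc]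
      have hTzzx : ∀ v, T (m+2) 1 (zOp qv V T dm dps (m+1) 1 (zOp qv V T dm dps (m+1) 2 v))
          = zOp qv V T dm dps (m+1) 2 (zOp qv V T dm dps (m+1) 1 (T (m+2) 1 v)) := fun v => by
        simpa using LinearMap.congr_fun hTzz v
      have hR9x : ∀ v, T (m+2) 1 (commDD V dm dp (m+1) (dp (m+1) v)) =
          qv • dp (m+1) (commDD V dm dp m v) := fun v => by
        simpa using LinearMap.congr_fun (h.1.2.2.2.2.2.2.2.2 m) v
      have hM7x : ∀ v, zOp qv V T dm dps (m+1) 1 (zOp qv V T dm dps (m+1) 2 (dp (m+1) v))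
          = zOp qv V T dm dps (m+1) 2 (zOp qv V T dm dps (m+1) 1 (dp (m+1) v)) := fun v => by
        simpa using LinearMap.congr_fun (zz_comm_comp_dp h hq m) v
      rw [commDD_Dp h hq (m+1), commDD_Dp h hq m]
      ext x
      simp only [DpOp, LinearMap.comp_apply, LinearMap.smul_apply, Module.End.mul_apply, map_smul]
      rw [hM2x, hTzzx, hR9x]
      simp only [map_smul]
      rw [← hM7x, ← hI1]
      simp only [smul_smul]
      congr 1
      ring
  · refine ⟨?_, ?_, ?_⟩
    · -- D₊ zᵢ = zᵢ₊₁ D₊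
      intro m i h1 h2
      obtain ⟨j, rfl⟩ : ∃ j, i = j + 1 := ⟨i - 1, by omega⟩
      have hI1x : ∀ v, dp (m+1) (zOp qv V T dm dps m (j+1) v) =
          zOp qv V T dm dps (m+1) (j+2) (dp (m+1) v) := fun v => by
        simpa using LinearMap.congr_fun (h.2.2.1 m (j+1) h1 h2) v
      have hM8x : ∀ v, zOp qv V T dm dps (m+1) 1 (zOp qv V T dm dps (m+1) (j+2) (dp (m+1) v))
          = zOp qv V T dm dps (m+1) (j+2) (zOp qv V T dm dps (m+1) 1 (dp (m+1) v)) :=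
        fun v => by
          simpa using LinearMap.congr_fun (zz_comm_comp_dp' h hq m j (by omega)) v
      ext x
      simp only [DpOp, LinearMap.comp_apply, LinearMap.smul_apply, map_smul]
      rw [hI1x, hM8x]
    · -- d₊* Yᵢ = Yᵢ₊₁ d₊*
      intro m i h1 h2
      exact dps_comp_Y h hq m i h1 h2
    · -- z₁ D₊ = −t q^{k+1} Y₁ d₊*
      intro m
      have hI3x : ∀ v, zOp qv V T dm dps m 1 (dp m v) =
          (-(tv * qv ^ (m+1))) • yOp qv V T dm dp m 1 (dps m v) := fun v => by
        simpa using LinearMap.congr_fun (h.2.2.2.2 m) v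
      have hY1x : ∀ v, yOp qv V T dm (DpOp qv tv V T dm dp dps) m 1 v =
          (-(qv * tv)⁻¹) • zOp qv V T dm dps m 1 (yOp qv V T dm dp m 1 v) := fun v => by
        simpa using LinearMap.congr_fun (Y1_eq h hq m) v
      ext x
      simp only [DpOp, LinearMap.comp_apply, LinearMap.smul_apply, map_smul]
      rw [hI3x, hY1x]
      simp only [map_smul, smul_smul]
      congr 1
      ring
end
end

section
/- Define D_+* := −y_1·d_+* : V_k → V_{k+1} (where y_1 acts on V_{k+1}). Then (T_i^{-1}, d_−, D_+*) satisfy the defining relations of an action of 𝔸_{q^{-1}}: T_1^{-1}(D_+*)² = (D_+*)²; D_+* T_i^{-1} = T_{i+1}^{-1} D_+* for 1 ≤ i ≤ k−1; d_−(D_+*d_− − d_−D_+*)T_{k−1}^{-1} = q^{-1}(D_+*d_− − d_−D_+*)d_− for k ≥ 2; and T_1^{-1}(D_+*d_− − d_−D_+*)D_+* = q^{-1}·D_+*(D_+*d_− − d_−D_+*) for k ≥ 1. Moreover the pair consisting of the original (T_i, d_−, d_+) and (T_i^{-1}, d_−, D_+*) is again correctly intertwined: setting Z_1 := (q^k/(1−q))(D_+*d_−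 − d_−D_+*)T*_{k↘1} and Z_{i+1} := q^{-1}·T_i Z_i T_i on V_k, one has d_+ Z_i = Z_{i+1} d_+ and D_+* y_i = y_{i+1} D_+* for 1 ≤ i ≤ k, and Z_1 d_+ = −t·q^{k+1}·y_1·D_+* as maps V_k → V_{k+1}. -/
noncomputable section

open LinearMap

namespace RhoAux

/-- Descending product `T_{b+n-1} ⋯ T_b` (`n` factors). -/
def Dprod {M : Type*} [Monoid M] (T : ℕ → M) (b : ℕ) : ℕ → M
  | 0 => 1
  | n + 1 => T (b + n) * Dprod T b n

theorem Dprod_succ {M : Type*} [Monoid M] (T : ℕ → M) (b n : ℕ) :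
    Dprod T b (n + 1) = T (b + n) * Dprod T b n := rfl

theorem Dprod_one_succ {M : Type*} [Monoid M] (T : ℕ → M) (n : ℕ) :
    Dprod T 1 (n + 1) = T (n + 1) * Dprod T 1 n := by
  rw [Dprod_succ, Nat.add_comm]

theorem Dprod_two_succ {M : Type*} [Monoid M] (T : ℕ → M) (n : ℕ) :
    Dprod T 2 (n + 1) = T (n + 2) * Dprod T 2 n := by
  rw [Dprod_succ, Nat.add_comm]

theorem TdownTo1_eq {M : Type*} [Monoid M] (T : ℕ → M) :
    ∀ j, TdownTo1 T (j + 1) = Dprod T 1 j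
  | 0 => rfl
  | j + 1 => by
      show T (j + 1) * TdownTo1 T (j + 1) = Dprod T 1 (j + 1)
      rw [TdownTo1_eq T j, Dprod_one_succ]

theorem Dprod_split_right {M : Type*} [Monoid M] (T : ℕ → M) (b : ℕ) :
    ∀ n, Dprod T b (n + 1) = Dprod T (b + 1) n * T b
  | 0 => by simp [Dprod]
  | n + 1 => by
      rw [Dprod_succ, Dprod_split_right T b n, ← mul_assoc, Dprod_succ]
      have : b + (n + 1) = b + 1 + n := by omega
      rw [this]

section Word

variable {M : Type*} [Monoid M] (S : ℕ → M) (K : ℕ)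

theorem commute_high
    (hcm : ∀ i j, 1 ≤ i → i + 1 < j → j + 1 ≤ K → S i * S j = S j * S i) :
    ∀ n, ∀ j, n + 2 ≤ j → j + 1 ≤ K → S j * Dprod S 1 n = Dprod S 1 n * S j
  | 0, j, _, _ => by simp [Dprod]
  | n + 1, j, h2, h3 => by
      rw [Dprod_one_succ, ← mul_assoc, ← hcm (n + 1) j (by omega) (by omega) h3,
        mul_assoc, commute_high hcm n j (by omega) h3, ← mul_assoc]

theorem word_C1
    (hbr : ∀ i, 1 ≤ i → i + 2 ≤ K → S i * S (i + 1) * S i = S (i + 1) * S i * S (i + 1))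
    (hcm : ∀ i j, 1 ≤ i → i + 1 < j → j + 1 ≤ K → S i * S j = S j * S i) :
    ∀ n, ∀ i, 1 ≤ i → i + 1 ≤ n → n + 1 ≤ K →
      Dprod S 1 n * S (i + 1) = S i * Dprod S 1 n := by
  intro n
  induction n with
  | zero => intro i h1 h2 h3; omega
  | succ n ih =>
    intro i h1 h2 h3
    rcases Nat.lt_or_ge (i + 1) (n + 1) with hlt | hge
    · rw [Dprod_one_succ, mul_assoc, ih i h1 (by omega) (by omega), ← mul_assoc,
        ← hcm i (n + 1) h1 (by omega) (by omega), mul_assoc]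
    · -- i + 1 = n + 1, i.e. n = i
      have hn : n = i := by omega
      obtain ⟨i', rfl⟩ : ∃ i', i = i' + 1 := ⟨i - 1, by omega⟩
      rw [hn, Dprod_one_succ, Dprod_one_succ]
      -- goal : S (i'+2) * (S (i'+1) * Dprod S 1 i') * S (i'+2) = S (i'+1) * (S (i'+2) * (S (i'+1) * Dprod S 1 i'))
      calc S (i' + 1 + 1) * (S (i' + 1) * Dprod S 1 i') * S (i' + 1 + 1)
          = S (i' + 1 + 1) * S (i' + 1) * S (i' + 1 + 1) * Dprod S 1 i' := by
            rw [mul_assoc, mul_assoc, ← commute_high S K hcm i' (i' + 1 + 1) (by omega) (by omega),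
              ← mul_assoc, ← mul_assoc]
        _ = S (i' + 1) * S (i' + 1 + 1) * S (i' + 1) * Dprod S 1 i' := by
            rw [← hbr (i' + 1) (by omega) (by omega)]
        _ = S (i' + 1) * (S (i' + 1 + 1) * (S (i' + 1) * Dprod S 1 i')) := by
            rw [mul_assoc, mul_assoc]

theorem word_W
    (hbr : ∀ i, 1 ≤ i → i + 2 ≤ K → S i * S (i + 1) * S i = S (i + 1) * S i * S (i + 1))
    (hcm : ∀ i j, 1 ≤ i → i + 1 < j → j + 1 ≤ K → S i * S j = S j * S i) :
    ∀ m n, m + 1 ≤ n → n + 1 ≤ K →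
      Dprod S 1 n * Dprod S 2 m = Dprod S 1 m * Dprod S 1 n := by
  intro m
  induction m with
  | zero => intro n _ _; simp [Dprod]
  | succ m ih =>
    intro n h1 h2
    rw [Dprod_two_succ, Dprod_one_succ, ← mul_assoc,
      word_C1 S K hbr hcm n (m + 1) (by omega) (by omega) h2,
      mul_assoc, ih n (by omega) h2, ← mul_assoc]

end Word

section Hecke

variable {F : Type*} [Field F] {M : Type*} [AddCommGroup M] [Module F M]

theorem hInv_mul_of {q : F} {X Y B : Module.End F M} (hXY : X * B = B * Y) :
    heckeInv q X * B = B * heckeInv q Y := by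
  unfold heckeInv
  rw [smul_mul_assoc, mul_smul_comm, add_mul, mul_add, smul_mul_assoc, mul_smul_comm,
    one_mul, mul_one, hXY]

theorem heckeInv_heckeInv {q : F} (hq : q ≠ 0) (X : Module.End F M) :
    heckeInv q⁻¹ (heckeInv q X) = X := by
  unfold heckeInv
  match_scalars <;> field_simp <;> ring

theorem quad_sq {q : F} {X : Module.End F M}
    (hrel : (X - 1) * (X + q • (1 : Module.End F M)) = 0) :
    X * X = X + q • (1 : Module.End F M) - q • X := by
  have e1 : (X - 1) * (X + q • (1 : Module.End F M))
      = X * X + q • X - X - q • (1 : Module.End F M) := by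
    rw [sub_mul, mul_add, one_mul, mul_smul_comm, mul_one]
    abel
  rw [e1] at hrel
  have e2 : X * X - (X + q • (1 : Module.End F M) - q • X)
      = X * X + q • X - X - q • (1 : Module.End F M) := by abel
  exact sub_eq_zero.mp (e2.trans hrel)

theorem hecke_inv_left {q : F} (hq : q ≠ 0) {X : Module.End F M}
    (hrel : (X - 1) * (X + q • (1 : Module.End F M)) = 0) :
    heckeInv q X * X = 1 := by
  unfold heckeInv
  rw [smul_mul_assoc, add_mul, smul_mul_assoc, one_mul, quad_sq hrel]
  match_scalars <;> field_simp <;> ring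

theorem hecke_inv_right {q : F} (hq : q ≠ 0) {X : Module.End F M}
    (hrel : (X - 1) * (X + q • (1 : Module.End F M)) = 0) :
    X * heckeInv q X = 1 := by
  unfold heckeInv
  rw [mul_smul_comm, mul_add, mul_smul_comm, mul_one, quad_sq hrel]
  match_scalars <;> field_simp <;> ring

end Hecke

section Generic

variable {F : Type*} [Field F] {q : F} {V : ℕ → Type*} [∀ k, AddCommGroup (V k)]
  [∀ k, Module F (V k)] {T : ∀ k, ℕ → Module.End F (V k)}
  {dm : ∀ k, V (k + 1) →ₗ[F] V k} {dp : ∀ k, V k →ₗ[F] V (k + 1)}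

theorem yOp_one (m : ℕ) :
    yOp q V T dm dp m 1
      = (q ^ m * (q - 1))⁻¹ • (commDD V dm dp m * Dprod (T (m + 1)) 1 m) := by
  rw [show yOp q V T dm dp m 1
      = (q ^ m * (q - 1))⁻¹ • (commDD V dm dp m * TdownTo1 (T (m + 1)) (m + 1)) from rfl,
    TdownTo1_eq]

theorem yOp_step (m i : ℕ) :
    yOp q V T dm dp m (i + 2)
      = q • (heckeInv q (T (m + 1) (i + 1)) * yOp q V T dm dp m (i + 1) *
          heckeInv q (T (m + 1) (i + 1))) := rfl

theorem zOp_one {dps : ∀ k, V k →ₗ[F] V (k + 1)} (m : ℕ) :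
    zOp q V T dm dps m 1
      = (q ^ (m + 1) / (1 - q)) •
          (commDD V dm dps m * Dprod (fun i => heckeInv q (T (m + 1) i)) 1 m) := by
  rw [show zOp q V T dm dps m 1
      = (q ^ (m + 1) / (1 - q)) • (commDD V dm dps m *
          TdownTo1 (fun i => heckeInv q (T (m + 1) i)) (m + 1)) from rfl,
    TdownTo1_eq]

theorem zOp_step {dps : ∀ k, V k →ₗ[F] V (k + 1)} (m i : ℕ) :
    zOp q V T dm dps m (i + 2)
      = q⁻¹ • (T (m + 1) (i + 1) * zOp q V T dm dps m (i + 1) * T (m + 1) (i + 1)) := rfl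

variable (hq : q ≠ 0) (h : AqRel q V T dm dp)

include hq h in
theorem T_hInv : ∀ k i, 1 ≤ i → i + 1 ≤ k → T k i * heckeInv q (T k i) = 1 :=
  fun k i h1 h2 => hecke_inv_right hq (h.1 k i h1 h2)

include hq h in
theorem hInv_T : ∀ k i, 1 ≤ i → i + 1 ≤ k → heckeInv q (T k i) * T k i = 1 :=
  fun k i h1 h2 => hecke_inv_left hq (h.1 k i h1 h2)

include h in
theorem T_commDD : ∀ m j, 1 ≤ j → j ≤ m →
    T (m + 2) (j + 1) * commDD V dm dp (m + 1)
      = commDD V dm dp (m + 1) * T (m + 2) j := by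
  intro m j h1 h2
  obtain ⟨_, _, _, _, htd, _, hpt, _, _⟩ := h
  ext x
  have e1 := LinearMap.congr_fun (hpt m j h1 h2) (dm (m + 1) x)
  have e2 := LinearMap.congr_fun (htd m j h1 h2) x
  have e3 := LinearMap.congr_fun (htd (m + 1) (j + 1) (by omega) (by omega)) (dp (m + 2) x)
  have e4 := LinearMap.congr_fun (hpt (m + 1) j h1 (by omega)) x
  simp only [LinearMap.comp_apply] at e1 e2 e3 e4
  simp only [commDD, Module.End.mul_apply, LinearMap.sub_apply, LinearMap.comp_apply, map_sub]
  rw [← e1, e2, e3, ← e4]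

include hq h in
theorem T1_commDD_sq : ∀ m,
    T (m + 2) 1 * (commDD V dm dp (m + 1) * commDD V dm dp (m + 1))
      = (commDD V dm dp (m + 1) * commDD V dm dp (m + 1)) * T (m + 2) (m + 1) := by
  intro m
  obtain ⟨_, _, _, _, htd, _, hpt, h8, h9⟩ := h
  have hphi : ∀ w : V (m + 2), commDD V dm dp (m + 1) w
      = dp (m + 1) (dm (m + 1) w) - dm (m + 2) (dp (m + 2) w) := fun w => rfl
  have ea : ∀ x : V (m + 1),
      T (m + 2) 1 (commDD V dm dp (m + 1) (dp (m + 1) x))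
        = q • dp (m + 1) (commDD V dm dp m x) := by
    intro x
    have := LinearMap.congr_fun (h9 m) x
    simpa using this
  have e8 : ∀ x : V (m + 2),
      dm (m + 1) (commDD V dm dp (m + 1) (T (m + 2) (m + 1) x))
        = q • commDD V dm dp m (dm (m + 1) x) := by
    intro x
    have := LinearMap.congr_fun (h8 m) x
    simpa using this
  have eA : ∀ x : V (m + 2),
      T (m + 2) 1 (commDD V dm dp (m + 1) (dp (m + 1) (dm (m + 1) x)))
        = dp (m + 1) (dm (m + 1) (commDD V dm dp (m + 1) (T (m + 2) (m + 1) x))) := by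
    intro x
    rw [ea (dm (m + 1) x), e8 x, map_smul]
  have e8' : ∀ x : V (m + 3),
      dm (m + 2) (commDD V dm dp (m + 2) (T (m + 3) (m + 2) x))
        = q • commDD V dm dp (m + 1) (dm (m + 2) x) := by
    intro x
    have := LinearMap.congr_fun (h8 (m + 1)) x
    simpa using this
  have ea' : ∀ x : V (m + 2),
      T (m + 3) 1 (commDD V dm dp (m + 2) (dp (m + 2) x))
        = q • dp (m + 2) (commDD V dm dp (m + 1) x) := by
    intro x
    have := LinearMap.congr_fun (h9 (m + 1)) x
    simpa using this
  have eB : ∀ x : V (m + 2),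
      T (m + 2) 1 (commDD V dm dp (m + 1) (dm (m + 2) (dp (m + 2) x)))
        = dm (m + 2) (dp (m + 2) (commDD V dm dp (m + 1) (T (m + 2) (m + 1) x))) := by
    intro x
    have h' : commDD V dm dp (m + 1) (dm (m + 2) (dp (m + 2) x))
        = q⁻¹ • dm (m + 2) (commDD V dm dp (m + 2) (T (m + 3) (m + 2) (dp (m + 2) x))) := by
      rw [e8' (dp (m + 2) x), smul_smul, inv_mul_cancel₀ hq, one_smul]
    have e5 := LinearMap.congr_fun (hpt (m + 1) (m + 1) (by omega) (by omega)) x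
    have e6 := LinearMap.congr_fun (htd (m + 1) 1 (by omega) (by omega))
      (commDD V dm dp (m + 2) (T (m + 3) (m + 2) (dp (m + 2) x)))
    simp only [LinearMap.comp_apply] at e5 e6
    rw [h', map_smul, e6, ← e5, ea' (T (m + 2) (m + 1) x), map_smul, smul_smul,
      inv_mul_cancel₀ hq, one_smul]
  ext x
  simp only [Module.End.mul_apply]
  calc T (m + 2) 1 (commDD V dm dp (m + 1) (commDD V dm dp (m + 1) x))
      = T (m + 2) 1 (commDD V dm dp (m + 1) (dp (m + 1) (dm (m + 1) x)))
          - T (m + 2) 1 (commDD V dm dp (m + 1) (dm (m + 2) (dp (m + 2) x))) := by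
        rw [hphi x, map_sub, map_sub]
    _ = dp (m + 1) (dm (m + 1) (commDD V dm dp (m + 1) (T (m + 2) (m + 1) x)))
          - dm (m + 2) (dp (m + 2) (commDD V dm dp (m + 1) (T (m + 2) (m + 1) x))) := by
        rw [eA, eB]
    _ = commDD V dm dp (m + 1) (commDD V dm dp (m + 1) (T (m + 2) (m + 1) x)) :=
        (hphi _).symm

include h in
theorem word_C1T (k : ℕ) : ∀ n i, 1 ≤ i → i + 1 ≤ n → n + 1 ≤ k →
    Dprod (T k) 1 n * T k (i + 1) = T k i * Dprod (T k) 1 n :=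
  word_C1 (T k) k (fun i h1 h2 => h.2.1 k i h1 h2)
    (fun i j h1 h2 h3 => h.2.2.1 k i j h1 (by omega) (by omega) h3 h2)

include h in
theorem word_WT (k : ℕ) : ∀ m n, m + 1 ≤ n → n + 1 ≤ k →
    Dprod (T k) 1 n * Dprod (T k) 2 m = Dprod (T k) 1 m * Dprod (T k) 1 n :=
  word_W (T k) k (fun i h1 h2 => h.2.1 k i h1 h2)
    (fun i j h1 h2 h3 => h.2.2.1 k i j h1 (by omega) (by omega) h3 h2)

include h in
theorem T_comm_y1 : ∀ m j, 2 ≤ j → j ≤ m →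
    T (m + 1) j * yOp q V T dm dp m 1 = yOp q V T dm dp m 1 * T (m + 1) j := by
  intro m j h2 h3
  obtain ⟨j', rfl⟩ : ∃ j', j = j' + 1 := ⟨j - 1, by omega⟩
  obtain ⟨m', rfl⟩ : ∃ m', m = m' + 1 := ⟨m - 1, by omega⟩
  have f2 : T (m' + 1 + 1) (j' + 1) * commDD V dm dp (m' + 1)
      = commDD V dm dp (m' + 1) * T (m' + 1 + 1) j' :=
    T_commDD h m' j' (by omega) (by omega)
  have c1 : Dprod (T (m' + 1 + 1)) 1 (m' + 1) * T (m' + 1 + 1) (j' + 1)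
      = T (m' + 1 + 1) j' * Dprod (T (m' + 1 + 1)) 1 (m' + 1) :=
    word_C1T h (m' + 1 + 1) (m' + 1) j' (by omega) (by omega) (by omega)
  rw [yOp_one, mul_smul_comm, smul_mul_assoc]
  congr 1
  rw [← mul_assoc, f2, mul_assoc, ← c1, ← mul_assoc]

include h in
theorem hInvT_comm_y1 : ∀ m j, 2 ≤ j → j ≤ m →
    heckeInv q (T (m + 1) j) * yOp q V T dm dp m 1
      = yOp q V T dm dp m 1 * heckeInv q (T (m + 1) j) := by
  intro m j h2 h3
  have e : T (m + 1) j * yOp q V T dm dp m 1 = yOp q V T dm dp m 1 * T (m + 1) j :=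
    T_comm_y1 h m j h2 h3
  exact hInv_mul_of e

include h in
theorem Dprod2_commDD : ∀ m n, n ≤ m →
    Dprod (T (m + 1 + 1)) 2 n * commDD V dm dp (m + 1)
      = commDD V dm dp (m + 1) * Dprod (T (m + 1 + 1)) 1 n := by
  intro m n
  induction n with
  | zero => intro _; simp [Dprod]
  | succ n ih =>
    intro hn
    have e1 : Dprod (T (m + 1 + 1)) 2 (n + 1)
        = T (m + 1 + 1) (n + 2) * Dprod (T (m + 1 + 1)) 2 n := Dprod_two_succ _ n
    have e2 : Dprod (T (m + 1 + 1)) 1 (n + 1)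
        = T (m + 1 + 1) (n + 1) * Dprod (T (m + 1 + 1)) 1 n := Dprod_one_succ _ n
    have f2 : T (m + 1 + 1) (n + 2) * commDD V dm dp (m + 1)
        = commDD V dm dp (m + 1) * T (m + 1 + 1) (n + 1) :=
      T_commDD h m (n + 1) (by omega) (by omega)
    rw [e1, e2, mul_assoc, ih (by omega), ← mul_assoc, f2, mul_assoc]

include hq h in
theorem y1_y2_comm : ∀ m,
    yOp q V T dm dp (m + 1) 1 * yOp q V T dm dp (m + 1) 2
      = yOp q V T dm dp (m + 1) 2 * yOp q V T dm dp (m + 1) 1 := by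
  intro m
  set S : ℕ → Module.End F (V (m + 1 + 1)) := T (m + 1 + 1) with hS
  set A : Module.End F (V (m + 1 + 1)) := commDD V dm dp (m + 1) with hA
  set c : F := (q ^ (m + 1) * (q - 1))⁻¹ with hc
  set W : Module.End F (V (m + 1 + 1)) := Dprod S 1 (m + 1) with hW
  set W' : Module.End F (V (m + 1 + 1)) := Dprod S 2 m with hW'
  set W'' : Module.End F (V (m + 1 + 1)) := Dprod S 1 m with hW''
  have hy1 : yOp q V T dm dp (m + 1) 1 = c • (A * W) := yOp_one (m + 1)
  have hsplit : W = W' * S 1 := Dprod_split_right S 1 m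
  have hW2 : W = S (m + 1) * W'' := Dprod_one_succ S m
  have hti : S 1 * heckeInv q (S 1) = 1 := T_hInv hq h (m + 1 + 1) 1 (by omega) (by omega)
  have hitm : heckeInv q (S (m + 1)) * S (m + 1) = 1 :=
    hInv_T hq h (m + 1 + 1) (m + 1) (by omega) (by omega)
  have hC2 : W' * A = A * W'' := Dprod2_commDD h m m (le_refl m)
  have hF4 : S 1 * (A * A) = (A * A) * S (m + 1) := T1_commDD_sq hq h m
  have hstar : heckeInv q (S 1) * (A * A) = (A * A) * heckeInv q (S (m + 1)) :=
    hInv_mul_of hF4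
  have hWrel : W * W' = W'' * W := word_WT h (m + 1 + 1) m (m + 1) (by omega) (by omega)
  have hcollapse : (A * W) * heckeInv q (S 1) = A * W' := by
    rw [hsplit, mul_assoc, mul_assoc, hti, mul_one]
  have hy2 : yOp q V T dm dp (m + 1) 2 = (q * c) • (heckeInv q (S 1) * (A * W')) := by
    rw [show yOp q V T dm dp (m + 1) 2
        = q • (heckeInv q (S 1) * yOp q V T dm dp (m + 1) 1 * heckeInv q (S 1)) from rfl,
      hy1, mul_smul_comm, smul_mul_assoc, smul_smul, mul_assoc, hcollapse]
  have hfin : heckeInv q (S (m + 1)) * (W'' * W) = W'' * W' := by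
    have e : W'' * W = S (m + 1) * (W'' * W') := by
      rw [← hWrel, hW2, mul_assoc]
    rw [e, ← mul_assoc, hitm, one_mul]
  have inner : ∀ U : Module.End F (V (m + 1 + 1)),
      (A * W') * (A * U) = (A * A) * (W'' * U) := by
    intro U
    rw [mul_assoc, ← mul_assoc W' A U, hC2, mul_assoc A W'' U, ← mul_assoc]
  rw [hy1, hy2, smul_mul_assoc, smul_mul_assoc, mul_smul_comm, mul_smul_comm,
    smul_smul, smul_smul, mul_comm c (q * c)]
  congr 1
  calc (A * W) * (heckeInv q (S 1) * (A * W'))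
      = ((A * W) * heckeInv q (S 1)) * (A * W') :=
        (mul_assoc (A * W) (heckeInv q (S 1)) (A * W')).symm
    _ = (A * W') * (A * W') := by rw [hcollapse]
    _ = (A * A) * (W'' * W') := inner W'
    _ = (A * A) * (heckeInv q (S (m + 1)) * (W'' * W)) := by rw [hfin]
    _ = ((A * A) * heckeInv q (S (m + 1))) * (W'' * W) :=
        (mul_assoc (A * A) (heckeInv q (S (m + 1))) (W'' * W)).symm
    _ = (heckeInv q (S 1) * (A * A)) * (W'' * W) := by rw [hstar]
    _ = heckeInv q (S 1) * ((A * A) * (W'' * W)) :=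
        mul_assoc (heckeInv q (S 1)) (A * A) (W'' * W)
    _ = heckeInv q (S 1) * ((A * W') * (A * W)) := by rw [inner W]
    _ = (heckeInv q (S 1) * (A * W')) * (A * W) :=
        (mul_assoc (heckeInv q (S 1)) (A * W') (A * W)).symm

include hq h in
theorem y1_comm_yj : ∀ m j, 1 ≤ j → j ≤ m + 1 →
    yOp q V T dm dp m 1 * yOp q V T dm dp m j
      = yOp q V T dm dp m j * yOp q V T dm dp m 1 := by
  intro m j
  induction j with
  | zero => omega
  | succ j ih =>
    intro h1 h2
    match j, ih, h2 with
    | 0, _, _ => rfl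
    | 1, _, h2 =>
      obtain ⟨m', rfl⟩ : ∃ m', m = m' + 1 := ⟨m - 1, by omega⟩
      exact y1_y2_comm hq h m'
    | (j + 2), ih, h2 =>
      have hstep : yOp q V T dm dp m (j + 3)
          = q • (heckeInv q (T (m + 1) (j + 2)) * yOp q V T dm dp m (j + 2) *
              heckeInv q (T (m + 1) (j + 2))) := yOp_step m (j + 1)
      set P := heckeInv q (T (m + 1) (j + 2)) with hPdef
      set Y := yOp q V T dm dp m (j + 2) with hYdef
      set y₁ := yOp q V T dm dp m 1 with hy1def
      have hP : y₁ * P = P * y₁ :=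
        (hInvT_comm_y1 h m (j + 2) (by omega) (by omega)).symm
      have hY : y₁ * Y = Y * y₁ := ih (by omega) (by omega)
      rw [hstep, mul_smul_comm, smul_mul_assoc]
      congr 1
      calc y₁ * (P * Y * P) = (y₁ * P) * (Y * P) := by
            rw [mul_assoc P Y P, ← mul_assoc]
        _ = (P * y₁) * (Y * P) := by rw [hP]
        _ = P * ((y₁ * Y) * P) := by rw [mul_assoc, ← mul_assoc y₁ Y P]
        _ = P * ((Y * y₁) * P) := by rw [hY]
        _ = P * (Y * (y₁ * P)) := by rw [mul_assoc]
        _ = P * (Y * (P * y₁)) := by rw [hP]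
        _ = P * Y * P * y₁ := by rw [← mul_assoc, ← mul_assoc, mul_assoc (P * Y) P y₁]

omit h in
include hq in
theorem scalar_step (m : ℕ) : (q ^ (m + 1) * (q - 1))⁻¹ * q = (q ^ m * (q - 1))⁻¹ := by
  have h1 : q ^ (m + 1) * (q - 1) = q * (q ^ m * (q - 1)) := by ring
  rw [h1, mul_inv, mul_comm q⁻¹, mul_assoc, inv_mul_cancel₀ hq, mul_one]

include h in
theorem dm_Dprod : ∀ m n, n ≤ m →
    dm (m + 1) ∘ₗ (Dprod (T (m + 2)) 1 n : Module.End F (V (m + 2)))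
      = (Dprod (T (m + 1)) 1 n : Module.End F (V (m + 1))) ∘ₗ dm (m + 1) := by
  intro m n
  induction n with
  | zero =>
    intro _
    ext x
    simp [Dprod]
  | succ n ih =>
    intro hn
    obtain ⟨_, _, _, _, htd, _, _, _, _⟩ := h
    rw [Dprod_one_succ (T (m + 2)) n, Dprod_one_succ (T (m + 1)) n]
    ext x
    have e1 := LinearMap.congr_fun (htd m (n + 1) (by omega) hn)
      (Dprod (T (m + 2)) 1 n x)
    have e2 := LinearMap.congr_fun (ih (by omega)) x
    simp only [LinearMap.comp_apply] at e1 e2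
    simp only [LinearMap.comp_apply, Module.End.mul_apply]
    rw [← e1, e2]

include h in
theorem Dprod2_dp : ∀ m n, n ≤ m →
    (Dprod (T (m + 2)) 2 n : Module.End F (V (m + 2))) ∘ₗ dp (m + 1)
      = dp (m + 1) ∘ₗ (Dprod (T (m + 1)) 1 n : Module.End F (V (m + 1))) := by
  intro m n
  induction n with
  | zero =>
    intro _
    ext x
    simp [Dprod]
  | succ n ih =>
    intro hn
    obtain ⟨_, _, _, _, _, _, hpt, _, _⟩ := h
    rw [Dprod_two_succ (T (m + 2)) n, Dprod_one_succ (T (m + 1)) n]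
    ext x
    have e1 := LinearMap.congr_fun (hpt m (n + 1) (by omega) hn)
      (Dprod (T (m + 1)) 1 n x)
    have e2 := LinearMap.congr_fun (ih (by omega)) x
    simp only [LinearMap.comp_apply] at e1 e2
    simp only [LinearMap.comp_apply, Module.End.mul_apply]
    rw [e2, ← e1]

include hq h in
theorem dm_y1 : ∀ m,
    dm (m + 1) ∘ₗ (yOp q V T dm dp (m + 1) 1 : Module.End F (V (m + 2)))
      = (yOp q V T dm dp m 1 : Module.End F (V (m + 1))) ∘ₗ dm (m + 1) := by
  intro m
  have h8 := h.2.2.2.2.2.2.2.1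
  rw [yOp_one (m + 1), yOp_one m]
  ext x
  have hsp : (Dprod (T (m + 1 + 1)) 1 (m + 1) : Module.End F (V (m + 2)))
      = T (m + 2) (m + 1) * Dprod (T (m + 2)) 1 m := Dprod_one_succ (T (m + 2)) m
  have e8 := LinearMap.congr_fun (h8 m) (Dprod (T (m + 2)) 1 m x)
  have e2 := LinearMap.congr_fun (dm_Dprod h m m (le_refl m)) x
  simp only [LinearMap.comp_apply, LinearMap.smul_apply] at e8 e2
  simp only [LinearMap.comp_apply, LinearMap.smul_apply, Module.End.mul_apply, map_smul]
  rw [hsp]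
  simp only [Module.End.mul_apply]
  rw [e8, e2, smul_smul, scalar_step hq m]

include hq h in
theorem dp_y1 : ∀ m,
    dp (m + 1) ∘ₗ (yOp q V T dm dp m 1 : Module.End F (V (m + 1)))
      = ((T (m + 2) 1 * yOp q V T dm dp (m + 1) 1 * heckeInv q (T (m + 2) 1) :
          Module.End F (V (m + 2)))) ∘ₗ dp (m + 1) := by
  intro m
  have h9 := h.2.2.2.2.2.2.2.2
  rw [yOp_one (m + 1), yOp_one m]
  ext x
  have hsp : (Dprod (T (m + 1 + 1)) 1 (m + 1) : Module.End F (V (m + 2)))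
      = Dprod (T (m + 2)) 2 m * T (m + 2) 1 := Dprod_split_right (T (m + 2)) 1 m
  have hti := LinearMap.congr_fun (T_hInv hq h (m + 2) 1 (by omega) (by omega)) (dp (m + 1) x)
  have e2 := LinearMap.congr_fun (Dprod2_dp h m m (le_refl m)) x
  have e9 := LinearMap.congr_fun (h9 m) (Dprod (T (m + 1)) 1 m x)
  simp only [LinearMap.comp_apply, LinearMap.smul_apply] at e2 e9
  simp only [Module.End.mul_apply, Module.End.one_apply] at hti
  simp only [LinearMap.comp_apply, LinearMap.smul_apply, Module.End.mul_apply, map_smul]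
  rw [hsp]
  simp only [Module.End.mul_apply]
  rw [hti, e2, e9, smul_smul, scalar_step hq m]

include hq h in
theorem hInvT1_comm_y1y2 : ∀ m,
    heckeInv q (T (m + 2) 1) *
        (yOp q V T dm dp (m + 1) 1 * yOp q V T dm dp (m + 1) 2)
      = (yOp q V T dm dp (m + 1) 1 * yOp q V T dm dp (m + 1) 2) *
          heckeInv q (T (m + 2) 1) := by
  intro m
  set hI := heckeInv q (T (m + 2) 1) with hIdef
  set y₁ := yOp q V T dm dp (m + 1) 1 with hy1def
  set y₂ := yOp q V T dm dp (m + 1) 2 with hy2def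
  have hy2eq : y₂ = q • (hI * y₁ * hI) := yOp_step (m + 1) 0
  calc hI * (y₁ * y₂) = hI * (y₁ * (q • (hI * y₁ * hI))) := by rw [hy2eq]
    _ = (q • (hI * y₁ * hI)) * (y₁ * hI) := by
        simp only [mul_smul_comm, smul_mul_assoc, mul_assoc]
    _ = y₂ * (y₁ * hI) := by rw [hy2eq]
    _ = (y₂ * y₁) * hI := (mul_assoc _ _ _).symm
    _ = (y₁ * y₂) * hI := by rw [← y1_y2_comm hq h m]

include hq h in
theorem hInv_psi_dp : ∀ m,
    (heckeInv q (T (m + 2) 1) : Module.End F (V (m + 2))) ∘ₗ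
        ((dp (m + 1) ∘ₗ dm (m + 1) - q⁻¹ • (dm (m + 2) ∘ₗ dp (m + 2)) :
          Module.End F (V (m + 2)))) ∘ₗ dp (m + 1)
      = dp (m + 1) ∘ₗ
          ((dp m ∘ₗ dm m - q⁻¹ • (dm (m + 1) ∘ₗ dp (m + 1)) :
            Module.End F (V (m + 1)))) := by
  intro m
  have htd := h.2.2.2.2.1
  have htp := h.2.2.2.2.2.1
  have h9 := h.2.2.2.2.2.2.2.2
  ext x
  have e1 : T (m + 3) 1 (dp (m + 2) (dp (m + 1) x)) = dp (m + 2) (dp (m + 1) x) := by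
    have := LinearMap.congr_fun (htp (m + 1)) x
    simpa using this
  have e2 : ∀ w : V (m + 3), T (m + 2) 1 (dm (m + 2) w) = dm (m + 2) (T (m + 3) 1 w) := by
    intro w
    have := LinearMap.congr_fun (htd (m + 1) 1 (by omega) (by omega)) w
    simpa using this
  have e9 : T (m + 2) 1 (commDD V dm dp (m + 1) (dp (m + 1) x))
      = q • dp (m + 1) (commDD V dm dp m x) := by
    simpa using LinearMap.congr_fun (h9 m) x
  have ecomm : ∀ w : V (m + 2),
      dp (m + 1) (dm (m + 1) w) = commDD V dm dp (m + 1) w + dm (m + 2) (dp (m + 2) w) := by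
    intro w
    simp only [commDD, LinearMap.sub_apply, LinearMap.comp_apply]
    abel
  have eB : T (m + 2) 1 (dm (m + 2) (dp (m + 2) (dp (m + 1) x)))
      = dm (m + 2) (dp (m + 2) (dp (m + 1) x)) := by
    rw [e2, e1]
  have eT : T (m + 2) 1 (dp (m + 1) (dm (m + 1) (dp (m + 1) x)))
      = q • dp (m + 1) (commDD V dm dp m x) + dm (m + 2) (dp (m + 2) (dp (m + 1) x)) := by
    rw [ecomm (dp (m + 1) x), map_add, e9, eB]
  have ecm : commDD V dm dp m x = dp m (dm m x) - dm (m + 1) (dp (m + 1) x) := rfl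
  simp only [LinearMap.comp_apply, LinearMap.sub_apply, LinearMap.smul_apply, heckeInv,
    LinearMap.add_apply, Module.End.one_apply, map_sub, map_smul, map_add]
  rw [eT, eB, ecm, map_sub]
  match_scalars
  all_goals field_simp
  all_goals ring

set_option linter.unusedSectionVars false in
include hq h in
theorem dp_hInvT : ∀ m i, 1 ≤ i → i ≤ m →
    dp (m + 1) ∘ₗ (heckeInv q (T (m + 1) i) : Module.End F (V (m + 1)))
      = (heckeInv q (T (m + 2) (i + 1)) : Module.End F (V (m + 2))) ∘ₗ dp (m + 1) := by
  intro m i h1 h2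
  have hpt := h.2.2.2.2.2.2.1
  ext x
  have e := LinearMap.congr_fun (hpt m i h1 h2) x
  simp only [LinearMap.comp_apply] at e
  simp only [LinearMap.comp_apply, heckeInv, LinearMap.smul_apply, LinearMap.add_apply,
    Module.End.one_apply, map_add, map_smul, e]

omit h in
include hq in
theorem zOp_eq_yOp {dps : ∀ k, V k →ₗ[F] V (k + 1)} (hq1 : q ≠ 1) : ∀ m i,
    zOp q V T dm dps m i
      = yOp q⁻¹ V (fun k i => heckeInv q (T k i)) dm dps m i := by
  intro m i
  induction i using Nat.strong_induction_on with
  | _ i ih =>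
    match i with
    | 0 => rfl
    | 1 =>
      rw [show zOp q V T dm dps m 1 = (q ^ (m + 1) / (1 - q)) •
            (commDD V dm dps m * TdownTo1 (fun i => heckeInv q (T (m + 1) i)) (m + 1))
          from rfl,
        show yOp q⁻¹ V (fun k i => heckeInv q (T k i)) dm dps m 1
            = ((q⁻¹) ^ m * (q⁻¹ - 1))⁻¹ •
              (commDD V dm dps m * TdownTo1 (fun i => heckeInv q (T (m + 1) i)) (m + 1))
          from rfl]
      congr 1
      have h1q : (1 : F) - q ≠ 0 := sub_ne_zero.mpr (Ne.symm hq1)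
      field_simp
      rw [one_div, inv_pow, pow_succ, mul_comm (q ^ m) q, mul_assoc,
        mul_inv_cancel₀ (pow_ne_zero m hq), mul_one]
    | (i + 2) =>
      rw [zOp_step,
        show yOp q⁻¹ V (fun k i => heckeInv q (T k i)) dm dps m (i + 2)
            = q⁻¹ • (heckeInv q⁻¹ (heckeInv q (T (m + 1) (i + 1))) *
                yOp q⁻¹ V (fun k i => heckeInv q (T k i)) dm dps m (i + 1) *
                heckeInv q⁻¹ (heckeInv q (T (m + 1) (i + 1)))) from rfl,
        heckeInv_heckeInv hq, ih (i + 1) (by omega)]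

end Generic

/-- The auxiliary operators `W_1 = y_1`, `W_{i+1} = T_i W_i T_i⁻¹`. -/
def WtOp {F : Type*} [Field F] (q : F) (V : ℕ → Type*) [∀ k, AddCommGroup (V k)]
    [∀ k, Module F (V k)] (T : ∀ k, ℕ → Module.End F (V k))
    (dm : ∀ k, V (k + 1) →ₗ[F] V k) (dp : ∀ k, V k →ₗ[F] V (k + 1)) (m : ℕ) :
    ℕ → Module.End F (V (m + 1))
  | 0 => 1
  | 1 => yOp q V T dm dp m 1
  | i + 2 => T (m + 1) (i + 1) * WtOp q V T dm dp m (i + 1) *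
      heckeInv q (T (m + 1) (i + 1))

section Generic2

variable {F : Type*} [Field F] {q : F} {V : ℕ → Type*} [∀ k, AddCommGroup (V k)]
  [∀ k, Module F (V k)] {T : ∀ k, ℕ → Module.End F (V k)}
  {dm : ∀ k, V (k + 1) →ₗ[F] V k} {dp : ∀ k, V k →ₗ[F] V (k + 1)}

variable (hq : q ≠ 0) (h : AqRel q V T dm dp)

include hq h in
theorem WtInt : ∀ m i, 1 ≤ i → i ≤ m + 1 →
    dp (m + 1) ∘ₗ (WtOp q V T dm dp m i : Module.End F (V (m + 1)))
      = (WtOp q V T dm dp (m + 1) (i + 1) : Module.End F (V (m + 2))) ∘ₗ dp (m + 1) := by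
  intro m i
  induction i using Nat.strong_induction_on with
  | _ i ih =>
    match i with
    | 0 => intro h1 _; omega
    | 1 => intro _ _; exact dp_y1 hq h m
    | (i + 2) =>
      intro _ h2
      have e := ih (i + 1) (by omega) (by omega) (by omega)
      have ept := h.2.2.2.2.2.2.1 m (i + 1) (by omega) (by omega)
      have ehi := dp_hInvT hq h m (i + 1) (by omega) (by omega)
      ext x
      show dp (m + 1) ((T (m + 1) (i + 1) * WtOp q V T dm dp m (i + 1) *
          heckeInv q (T (m + 1) (i + 1))) x)
        = (T (m + 2) (i + 2) * WtOp q V T dm dp (m + 1) (i + 2) *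
            heckeInv q (T (m + 2) (i + 2))) (dp (m + 1) x)
      have e' := LinearMap.congr_fun e (heckeInv q (T (m + 1) (i + 1)) x)
      have ept' := LinearMap.congr_fun ept
        (WtOp q V T dm dp m (i + 1) (heckeInv q (T (m + 1) (i + 1)) x))
      have ehi' := LinearMap.congr_fun ehi x
      simp only [LinearMap.comp_apply] at e' ept' ehi'
      simp only [Module.End.mul_apply]
      rw [ept', e', ehi']

end Generic2

end RhoAux

namespace RhoAux

theorem qv_ne_zero : qv ≠ 0 := by
  have hinj : Function.Injective (algebraMap (MvPolynomial (Fin 2) ℚ) Fqt) :=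
    IsFractionRing.injective _ _
  simp only [qv, ne_eq, map_eq_zero_iff _ hinj]
  exact MvPolynomial.X_ne_zero 0

theorem tv_ne_zero : tv ≠ 0 := by
  have hinj : Function.Injective (algebraMap (MvPolynomial (Fin 2) ℚ) Fqt) :=
    IsFractionRing.injective _ _
  simp only [tv, ne_eq, map_eq_zero_iff _ hinj]
  exact MvPolynomial.X_ne_zero 1

theorem qv_ne_one : qv ≠ 1 := by
  intro e
  have hinj : Function.Injective (algebraMap (MvPolynomial (Fin 2) ℚ) Fqt) :=
    IsFractionRing.injective _ _
  have e2 : (MvPolynomial.X 0 : MvPolynomial (Fin 2) ℚ) = 1 := hinj (by rw [map_one]; exact e)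
  have e3 := congrArg (MvPolynomial.eval (fun _ => (0 : ℚ))) e2
  simp at e3

end RhoAux

set_option maxHeartbeats 2000000 in
/-- Replication: given correctly intertwined actions of `𝔸_q` and `𝔸_{q⁻¹}` over
`ℚ(q,t)`, the operator `D₊* := −y_1 d₊* : V_k → V_{k+1}` together with `T_i⁻¹`, `d₋`
again satisfies the defining relations of an action of `𝔸_{q⁻¹}`, and the pair
`(T, d₋, d₊)`, `(T⁻¹, d₋, D₊*)` is again correctly intertwined. -/
theorem replication_rho_two (V : ℕ → Type*) [∀ k, AddCommGroup (V k)]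
    [∀ k, Module Fqt (V k)] (T : ∀ k, ℕ → Module.End Fqt (V k))
    (dm : ∀ k, V (k + 1) →ₗ[Fqt] V k) (dp dps : ∀ k, V k →ₗ[Fqt] V (k + 1))
    (h : CorrectlyIntertwined qv tv V T dm dp dps) :
    AqRel qv⁻¹ V (fun k i => heckeInv qv (T k i)) dm
      (fun k => -((yOp qv V T dm dp k 1 : V (k + 1) →ₗ[Fqt] V (k + 1)) ∘ₗ dps k)) ∧
    IntertwineRel qv tv V T dm dp
      (fun k => -((yOp qv V T dm dp k 1 : V (k + 1) →ₗ[Fqt] V (k + 1)) ∘ₗ dps k)) := by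
  have hq0 : qv ≠ 0 := RhoAux.qv_ne_zero
  have hq1 : qv ≠ 1 := RhoAux.qv_ne_one
  have ht0 : tv ≠ 0 := RhoAux.tv_ne_zero
  have hqi0 : qv⁻¹ ≠ 0 := inv_ne_zero hq0
  have hqi1 : qv⁻¹ ≠ 1 := fun e => hq1 (inv_eq_one.mp e)
  obtain ⟨hA, hA2, hIi, hIii, hIiii⟩ := h
  set Dop : ∀ k, V k →ₗ[Fqt] V (k + 1) :=
    fun k => -((yOp qv V T dm dp k 1 : V (k + 1) →ₗ[Fqt] V (k + 1)) ∘ₗ dps k) with hDop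
  have hDop' : ∀ k, Dop k
      = -((yOp qv V T dm dp k 1 : V (k + 1) →ₗ[Fqt] V (k + 1)) ∘ₗ dps k) := fun k => rfl
  have hzy : ∀ m i, zOp qv V T dm dps m i
      = yOp qv⁻¹ V (fun k i => heckeInv qv (T k i)) dm dps m i :=
    RhoAux.zOp_eq_yOp hq0 hq1
  have hdmz1 : ∀ m, dm (m + 1) ∘ₗ (zOp qv V T dm dps (m + 1) 1 : Module.End Fqt (V (m + 2)))
      = (zOp qv V T dm dps m 1 : Module.End Fqt (V (m + 1))) ∘ₗ dm (m + 1) := by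
    intro m
    rw [hzy (m + 1) 1, hzy m 1]
    exact RhoAux.dm_y1 hqi0 hA2 m
  have hz12 : ∀ m, T (m + 2) 1 *
        (zOp qv V T dm dps (m + 1) 1 * zOp qv V T dm dps (m + 1) 2)
      = (zOp qv V T dm dps (m + 1) 1 * zOp qv V T dm dps (m + 1) 2) * T (m + 2) 1 := by
    intro m
    have e := RhoAux.hInvT1_comm_y1y2 hqi0 hA2 m
    rw [RhoAux.heckeInv_heckeInv hq0 (T (m + 2) 1), ← hzy (m + 1) 1, ← hzy (m + 1) 2] at e
    exact e
  have hz12I : ∀ m, heckeInv qv (T (m + 2) 1) *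
        (zOp qv V T dm dps (m + 1) 1 * zOp qv V T dm dps (m + 1) 2)
      = (zOp qv V T dm dps (m + 1) 1 * zOp qv V T dm dps (m + 1) 2) *
          heckeInv qv (T (m + 2) 1) :=
    fun m => RhoAux.hInv_mul_of (hz12 m)
  have hdmz2 : ∀ m, dm (m + 2) ∘ₗ (zOp qv V T dm dps (m + 2) 2 : Module.End Fqt (V (m + 3)))
      = (zOp qv V T dm dps (m + 1) 2 : Module.End Fqt (V (m + 2))) ∘ₗ dm (m + 2) := by
    intro m
    have ez3 : zOp qv V T dm dps (m + 2) 2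
        = qv⁻¹ • (T (m + 3) 1 * zOp qv V T dm dps (m + 2) 1 * T (m + 3) 1) :=
      RhoAux.zOp_step (m + 2) 0
    have ez2 : zOp qv V T dm dps (m + 1) 2
        = qv⁻¹ • (T (m + 2) 1 * zOp qv V T dm dps (m + 1) 1 * T (m + 2) 1) :=
      RhoAux.zOp_step (m + 1) 0
    have htd1 := hA.2.2.2.2.1 (m + 1) 1 (by omega) (by omega)
    ext x
    have e1 : ∀ w : V (m + 3), T (m + 2) 1 (dm (m + 2) w) = dm (m + 2) (T (m + 3) 1 w) := by
      intro w
      have := LinearMap.congr_fun htd1 w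
      simpa using this
    have e2 : ∀ u : V (m + 3), dm (m + 2) (zOp qv V T dm dps (m + 2) 1 u)
        = zOp qv V T dm dps (m + 1) 1 (dm (m + 2) u) := by
      intro u
      have := LinearMap.congr_fun (hdmz1 (m + 1)) u
      simpa using this
    simp only [LinearMap.comp_apply, ez3, ez2, LinearMap.smul_apply, Module.End.mul_apply,
      map_smul]
    rw [← e1, e2, ← e1]
  have hpsiz : ∀ m,
      ((dp (m + 1) ∘ₗ dm (m + 1) - qv⁻¹ • (dm (m + 2) ∘ₗ dp (m + 2)) :
          Module.End Fqt (V (m + 2)))) * zOp qv V T dm dps (m + 1) 1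
        = zOp qv V T dm dps (m + 1) 2 *
            ((dp (m + 1) ∘ₗ dm (m + 1) - qv⁻¹ • (dm (m + 2) ∘ₗ dp (m + 2)))) := by
    intro m
    ext x
    have ea : ∀ u : V (m + 2), dm (m + 1) (zOp qv V T dm dps (m + 1) 1 u)
        = zOp qv V T dm dps m 1 (dm (m + 1) u) := by
      intro u
      have := LinearMap.congr_fun (hdmz1 m) u
      simpa using this
    have eb : ∀ w : V (m + 1), dp (m + 1) (zOp qv V T dm dps m 1 w)
        = zOp qv V T dm dps (m + 1) 2 (dp (m + 1) w) := by
      intro w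
      have := LinearMap.congr_fun (hIi m 1 (by omega) (by omega)) w
      simpa using this
    have ec : ∀ u : V (m + 2), dp (m + 2) (zOp qv V T dm dps (m + 1) 1 u)
        = zOp qv V T dm dps (m + 2) 2 (dp (m + 2) u) := by
      intro u
      have := LinearMap.congr_fun (hIi (m + 1) 1 (by omega) (by omega)) u
      simpa using this
    have ed : ∀ u : V (m + 3), dm (m + 2) (zOp qv V T dm dps (m + 2) 2 u)
        = zOp qv V T dm dps (m + 1) 2 (dm (m + 2) u) := by
      intro u
      have := LinearMap.congr_fun (hdmz2 m) u
      simpa using this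
    simp only [Module.End.mul_apply, LinearMap.sub_apply, LinearMap.smul_apply,
      LinearMap.comp_apply, map_sub, map_smul]
    rw [ea, eb, ec, ed]
  have hDz : ∀ m, Dop m = (tv * qv ^ (m + 1))⁻¹ •
      ((zOp qv V T dm dps m 1 : Module.End Fqt (V (m + 1))) ∘ₗ dp m) := by
    intro m
    have hc : -(tv * qv ^ (m + 1)) ≠ 0 :=
      neg_ne_zero.mpr (mul_ne_zero ht0 (pow_ne_zero _ hq0))
    have e2 : (yOp qv V T dm dp m 1 : Module.End Fqt (V (m + 1))) ∘ₗ dps m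
        = (-(tv * qv ^ (m + 1)))⁻¹ •
            ((zOp qv V T dm dps m 1 : Module.End Fqt (V (m + 1))) ∘ₗ dp m) := by
      rw [hIiii m, smul_smul, inv_mul_cancel₀ hc, one_smul]
    rw [hDop' m, e2, inv_neg, neg_smul, neg_neg]
  have hPhiY : ∀ m, commDD V dm Dop m
      = -(yOp qv V T dm dp m 1 * commDD V dm dps m) := by
    intro m
    ext x
    have e : dm (m + 1) (yOp qv V T dm dp (m + 1) 1 (dps (m + 1) x))
        = yOp qv V T dm dp m 1 (dm (m + 1) (dps (m + 1) x)) := by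
      have := LinearMap.congr_fun (RhoAux.dm_y1 hq0 hA m) (dps (m + 1) x)
      simpa using this
    have hcd : commDD V dm dps m x = dps m (dm m x) - dm (m + 1) (dps (m + 1) x) := rfl
    show Dop m (dm m x) - dm (m + 1) (Dop (m + 1) x) = _
    rw [hDop' m, hDop' (m + 1)]
    simp only [LinearMap.neg_apply, LinearMap.comp_apply, Module.End.mul_apply, map_neg,
      sub_neg_eq_add]
    rw [e, hcd, map_sub]
    abel
  have hPhiZ : ∀ m, commDD V dm Dop m
      = (tv * qv ^ (m + 1))⁻¹ • (zOp qv V T dm dps m 1 *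
          ((dp m ∘ₗ dm m - qv⁻¹ • (dm (m + 1) ∘ₗ dp (m + 1)) :
            Module.End Fqt (V (m + 1))))) := by
    intro m
    ext x
    have e1 := LinearMap.congr_fun (hDz m) (dm m x)
    have e2 := LinearMap.congr_fun (hDz (m + 1)) x
    have e3 : dm (m + 1) (zOp qv V T dm dps (m + 1) 1 (dp (m + 1) x))
        = zOp qv V T dm dps m 1 (dm (m + 1) (dp (m + 1) x)) := by
      have := LinearMap.congr_fun (hdmz1 m) (dp (m + 1) x)
      simpa using this
    simp only [LinearMap.comp_apply, LinearMap.smul_apply] at e1 e2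
    show Dop m (dm m x) - dm (m + 1) (Dop (m + 1) x) = _
    rw [e1, e2, map_smul, e3]
    have hsc : (tv * qv ^ (m + 1 + 1))⁻¹ = (tv * qv ^ (m + 1))⁻¹ * qv⁻¹ := by
      rw [pow_succ, ← mul_assoc, mul_inv]
    simp only [Module.End.mul_apply, LinearMap.smul_apply, LinearMap.sub_apply,
      LinearMap.comp_apply, map_sub, map_smul]
    rw [smul_sub, smul_smul, hsc]
  have hZW : ∀ m i, 1 ≤ i → i ≤ m + 1 →
      zOp qv V T dm Dop m i
        = -(RhoAux.WtOp qv V T dm dp m i * zOp qv V T dm dps m i) := by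
    intro m i
    induction i using Nat.strong_induction_on with
    | _ i ih =>
      match i with
      | 0 => intro h1 _; omega
      | 1 =>
        intro _ _
        have e1 : zOp qv V T dm Dop m 1 = (qv ^ (m + 1) / (1 - qv)) •
            (commDD V dm Dop m * RhoAux.Dprod (fun i => heckeInv qv (T (m + 1) i)) 1 m) :=
          RhoAux.zOp_one m
        have e2 : zOp qv V T dm dps m 1 = (qv ^ (m + 1) / (1 - qv)) •
            (commDD V dm dps m * RhoAux.Dprod (fun i => heckeInv qv (T (m + 1) i)) 1 m) :=
          RhoAux.zOp_one m
        have e3 : RhoAux.WtOp qv V T dm dp m 1 = yOp qv V T dm dp m 1 := rfl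
        rw [e1, e2, e3, hPhiY m, neg_mul, smul_neg, mul_smul_comm, mul_assoc]
      | (i + 2) =>
        intro _ h2
        have e := ih (i + 1) (by omega) (by omega) (by omega)
        have ezD : zOp qv V T dm Dop m (i + 2)
            = qv⁻¹ • (T (m + 1) (i + 1) * zOp qv V T dm Dop m (i + 1) *
                T (m + 1) (i + 1)) :=
          RhoAux.zOp_step m i
        have ezs : zOp qv V T dm dps m (i + 2)
            = qv⁻¹ • (T (m + 1) (i + 1) * zOp qv V T dm dps m (i + 1) *
                T (m + 1) (i + 1)) :=
          RhoAux.zOp_step m i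
        have eW : RhoAux.WtOp qv V T dm dp m (i + 2)
            = T (m + 1) (i + 1) * RhoAux.WtOp qv V T dm dp m (i + 1) *
                heckeInv qv (T (m + 1) (i + 1)) := rfl
        have hIT : heckeInv qv (T (m + 1) (i + 1)) * T (m + 1) (i + 1) = 1 :=
          RhoAux.hInv_T hq0 hA (m + 1) (i + 1) (by omega) (by omega)
        rw [ezD, ezs, eW, e]
        rw [mul_neg, neg_mul, smul_neg, mul_smul_comm]
        congr 2
        simp only [mul_assoc]
        congr 2
        rw [← mul_assoc, hIT, one_mul]
  refine ⟨⟨hA2.1, hA2.2.1, hA2.2.2.1, hA2.2.2.2.1, hA2.2.2.2.2.1, ?_, ?_, ?_, ?_⟩,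
    ?_, ?_, ?_⟩
  · intro m
    show (heckeInv qv (T (m + 2) 1) : Module.End Fqt (V (m + 2))) ∘ₗ Dop (m + 1) ∘ₗ Dop m
      = Dop (m + 1) ∘ₗ Dop m
    ext x
    have e1 : dps (m + 1) (yOp qv V T dm dp m 1 (dps m x))
        = yOp qv V T dm dp (m + 1) 2 (dps (m + 1) (dps m x)) := by
      have := LinearMap.congr_fun (hIii m 1 (by omega) (by omega)) (dps m x)
      simpa using this
    have e2 : ∀ u : V (m + 2), heckeInv qv (T (m + 2) 1)
          (yOp qv V T dm dp (m + 1) 1 (yOp qv V T dm dp (m + 1) 2 u))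
        = yOp qv V T dm dp (m + 1) 1 (yOp qv V T dm dp (m + 1) 2
            (heckeInv qv (T (m + 2) 1) u)) := by
      intro u
      have := LinearMap.congr_fun (RhoAux.hInvT1_comm_y1y2 hq0 hA m) u
      simpa [Module.End.mul_apply] using this
    have e3 : heckeInv qv (T (m + 2) 1) (dps (m + 1) (dps m x)) = dps (m + 1) (dps m x) := by
      have := LinearMap.congr_fun (hA2.2.2.2.2.2.1 m) x
      simpa using this
    simp only [LinearMap.comp_apply, hDop', LinearMap.neg_apply, map_neg, neg_neg]
    rw [e1, e2, e3]
  · intro m i h1 h2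
    show Dop (m + 1) ∘ₗ (heckeInv qv (T (m + 1) i) : Module.End Fqt (V (m + 1)))
      = (heckeInv qv (T (m + 2) (i + 1)) : Module.End Fqt (V (m + 2))) ∘ₗ Dop (m + 1)
    ext x
    have e1 : dps (m + 1) (heckeInv qv (T (m + 1) i) x)
        = heckeInv qv (T (m + 2) (i + 1)) (dps (m + 1) x) := by
      have := LinearMap.congr_fun (hA2.2.2.2.2.2.2.1 m i h1 h2) x
      simpa using this
    have e2 : yOp qv V T dm dp (m + 1) 1 (heckeInv qv (T (m + 2) (i + 1)) (dps (m + 1) x))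
        = heckeInv qv (T (m + 2) (i + 1)) (yOp qv V T dm dp (m + 1) 1 (dps (m + 1) x)) := by
      have := LinearMap.congr_fun
        (RhoAux.hInvT_comm_y1 hA (m + 1) (i + 1) (by omega) (by omega)) (dps (m + 1) x)
      simp only [Module.End.mul_apply] at this
      exact this.symm
    simp only [LinearMap.comp_apply, hDop', LinearMap.neg_apply, map_neg]
    rw [e1, e2]
  · intro m
    show dm (m + 1) ∘ₗ (commDD V dm Dop (m + 1) : Module.End Fqt (V (m + 2))) ∘ₗ
        (heckeInv qv (T (m + 2) (m + 1)) : Module.End Fqt (V (m + 2)))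
      = qv⁻¹ • ((commDD V dm Dop m : Module.End Fqt (V (m + 1))) ∘ₗ dm (m + 1))
    rw [hPhiY (m + 1), hPhiY m]
    ext x
    have e1 : dm (m + 1) (yOp qv V T dm dp (m + 1) 1
          (commDD V dm dps (m + 1) (heckeInv qv (T (m + 2) (m + 1)) x)))
        = yOp qv V T dm dp m 1 (dm (m + 1)
            (commDD V dm dps (m + 1) (heckeInv qv (T (m + 2) (m + 1)) x))) := by
      have := LinearMap.congr_fun (RhoAux.dm_y1 hq0 hA m)
        (commDD V dm dps (m + 1) (heckeInv qv (T (m + 2) (m + 1)) x))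
      simpa using this
    have e2 : dm (m + 1) (commDD V dm dps (m + 1) (heckeInv qv (T (m + 2) (m + 1)) x))
        = qv⁻¹ • commDD V dm dps m (dm (m + 1) x) := by
      have := LinearMap.congr_fun (hA2.2.2.2.2.2.2.2.1 m) x
      simpa using this
    simp only [LinearMap.comp_apply, LinearMap.neg_apply, Module.End.mul_apply, map_neg,
      LinearMap.smul_apply, neg_neg]
    rw [e1, e2, map_smul, smul_neg]
  · intro m
    show (heckeInv qv (T (m + 2) 1) : Module.End Fqt (V (m + 2))) ∘ₗ
        (commDD V dm Dop (m + 1) : Module.End Fqt (V (m + 2))) ∘ₗ Dop (m + 1)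
      = qv⁻¹ • (Dop (m + 1) ∘ₗ (commDD V dm Dop m : Module.End Fqt (V (m + 1))))
    rw [hPhiZ (m + 1), hPhiZ m, hDz (m + 1)]
    ext x
    have ez : ((dp (m + 1) ∘ₗ dm (m + 1) - qv⁻¹ • (dm (m + 1 + 1) ∘ₗ dp (m + 1 + 1)) :
          Module.End Fqt (V (m + 2))))
          (zOp qv V T dm dps (m + 1) 1 (dp (m + 1) x))
        = zOp qv V T dm dps (m + 1) 2
            (((dp (m + 1) ∘ₗ dm (m + 1) - qv⁻¹ • (dm (m + 1 + 1) ∘ₗ dp (m + 1 + 1)) :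
              Module.End Fqt (V (m + 2)))) (dp (m + 1) x)) := by
      have := LinearMap.congr_fun (hpsiz m) (dp (m + 1) x)
      simpa [Module.End.mul_apply] using this
    have ecz : ∀ u : V (m + 2), heckeInv qv (T (m + 2) 1)
          (zOp qv V T dm dps (m + 1) 1 (zOp qv V T dm dps (m + 1) 2 u))
        = zOp qv V T dm dps (m + 1) 1 (zOp qv V T dm dps (m + 1) 2
            (heckeInv qv (T (m + 2) 1) u)) := by
      intro u
      have := LinearMap.congr_fun (hz12I m) u
      simpa [Module.End.mul_apply] using this
    have etpsi : heckeInv qv (T (m + 2) 1)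
          (((dp (m + 1) ∘ₗ dm (m + 1) - qv⁻¹ • (dm (m + 1 + 1) ∘ₗ dp (m + 1 + 1)) :
            Module.End Fqt (V (m + 2)))) (dp (m + 1) x))
        = dp (m + 1) (((dp m ∘ₗ dm m - qv⁻¹ • (dm (m + 1) ∘ₗ dp (m + 1)) :
            Module.End Fqt (V (m + 1)))) x) := by
      have := LinearMap.congr_fun (RhoAux.hInv_psi_dp hq0 hA m) x
      simpa using this
    have edpz : ∀ w : V (m + 1), dp (m + 1) (zOp qv V T dm dps m 1 w)
        = zOp qv V T dm dps (m + 1) 2 (dp (m + 1) w) := by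
      intro w
      have := LinearMap.congr_fun (hIi m 1 (by omega) (by omega)) w
      simpa using this
    simp only [LinearMap.comp_apply, LinearMap.smul_apply, Module.End.mul_apply, map_smul]
    rw [ez, ecz, etpsi, edpz]
    simp only [smul_smul]
    congr 1
    simp only [pow_succ, mul_inv]
    ring
  · intro m i h1 h2
    show dp (m + 1) ∘ₗ (zOp qv V T dm Dop m i : Module.End Fqt (V (m + 1)))
      = (zOp qv V T dm Dop (m + 1) (i + 1) : Module.End Fqt (V (m + 2))) ∘ₗ dp (m + 1)
    rw [hZW m i h1 h2, hZW (m + 1) (i + 1) (by omega) (by omega)]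
    ext x
    have e1 : dp (m + 1) (RhoAux.WtOp qv V T dm dp m i (zOp qv V T dm dps m i x))
        = RhoAux.WtOp qv V T dm dp (m + 1) (i + 1)
            (dp (m + 1) (zOp qv V T dm dps m i x)) := by
      have := LinearMap.congr_fun (RhoAux.WtInt hq0 hA m i h1 h2)
        (zOp qv V T dm dps m i x)
      simpa using this
    have e2 : dp (m + 1) (zOp qv V T dm dps m i x)
        = zOp qv V T dm dps (m + 1) (i + 1) (dp (m + 1) x) := by
      have := LinearMap.congr_fun (hIi m i h1 h2) x
      simpa using this
    simp only [LinearMap.comp_apply, LinearMap.neg_apply, Module.End.mul_apply, map_neg]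
    rw [e1, e2]
  · intro m i h1 h2
    show Dop (m + 1) ∘ₗ (yOp qv V T dm dp m i : Module.End Fqt (V (m + 1)))
      = (yOp qv V T dm dp (m + 1) (i + 1) : Module.End Fqt (V (m + 2))) ∘ₗ Dop (m + 1)
    ext x
    have e1 : dps (m + 1) (yOp qv V T dm dp m i x)
        = yOp qv V T dm dp (m + 1) (i + 1) (dps (m + 1) x) := by
      have := LinearMap.congr_fun (hIii m i h1 h2) x
      simpa using this
    have e2 : yOp qv V T dm dp (m + 1) 1
          (yOp qv V T dm dp (m + 1) (i + 1) (dps (m + 1) x))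
        = yOp qv V T dm dp (m + 1) (i + 1)
            (yOp qv V T dm dp (m + 1) 1 (dps (m + 1) x)) := by
      have := LinearMap.congr_fun
        (RhoAux.y1_comm_yj hq0 hA (m + 1) (i + 1) (by omega) (by omega)) (dps (m + 1) x)
      simpa [Module.End.mul_apply] using this
    simp only [LinearMap.comp_apply, hDop', LinearMap.neg_apply, map_neg]
    rw [e1, e2]
  · intro m
    show (zOp qv V T dm Dop m 1 : Module.End Fqt (V (m + 1))) ∘ₗ dp m
      = (-(tv * qv ^ (m + 1))) •
          ((yOp qv V T dm dp m 1 : Module.End Fqt (V (m + 1))) ∘ₗ Dop m)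
    rw [hZW m 1 (by omega) (by omega)]
    ext x
    have e3 : RhoAux.WtOp qv V T dm dp m 1 = yOp qv V T dm dp m 1 := rfl
    have e1 : zOp qv V T dm dps m 1 (dp m x)
        = (-(tv * qv ^ (m + 1))) • yOp qv V T dm dp m 1 (dps m x) := by
      have := LinearMap.congr_fun (hIiii m) x
      simpa using this
    simp only [LinearMap.comp_apply, LinearMap.neg_apply, Module.End.mul_apply, map_neg,
      LinearMap.smul_apply, hDop', e3]
    rw [e1, map_smul, smul_neg, neg_smul, neg_neg]
end
end

section
/- For k ≥ 1 set ỹ_1 := T_{1↗k} · y_k · T*_{k↘1} as an operator on V_k, where T_{1↗k} = T_1 T_2 ⋯ T_{k−1} and T*_{k↘1} = T_{k−1}^{-1} ⋯ T_1^{-1}. Then z_1 · ỹ_1 = t · y_1 · z_1 + t·q^k · d_− · y_1 · d_+* · T*_{k↘1} as operators on V_k (on the right-hand side T*_{k↘1} acts on V_k, then d_+* : V_k → V_{k+1}, then y_1 acts on V_{k+1}, then d_− : V_{k+1} → V_k). -/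
noncomputable section

open LinearMap

section ZYaux

variable {F : Type*} [Field F]

lemma hecke_mul_inv {q : F} (hq : q ≠ 0) {M : Type*} [AddCommGroup M] [Module F M]
    {S : Module.End F M} (hrel : (S - 1) * (S + q • (1 : Module.End F M)) = 0) :
    S * heckeInv q S = 1 ∧ heckeInv q S * S = 1 := by
  have h := hrel
  rw [sub_mul, one_mul, mul_add, mul_smul_comm, mul_one, sub_eq_zero] at h
  -- h : S * S + q • S = S + q • 1
  have key : S * S + (q - 1) • S = q • (1 : Module.End F M) := by
    rw [sub_smul, one_smul, add_sub, h, add_sub_cancel_left]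
  constructor
  · rw [heckeInv, mul_smul_comm, mul_add, mul_smul_comm, mul_one, key, smul_smul,
      inv_mul_cancel₀ hq, one_smul]
  · rw [heckeInv, smul_mul_assoc, add_mul, smul_mul_assoc, one_mul, key, smul_smul,
      inv_mul_cancel₀ hq, one_smul]

lemma tup_tdown {M : Type*} [Monoid M] (A B : ℕ → M) :
    ∀ j, (∀ i, 1 ≤ i → i + 1 ≤ j → A i * B i = 1) →
      TupFrom1 A j * TdownTo1 B j = 1
  | 0, _ => by simp [TupFrom1, TdownTo1]
  | 1, _ => by simp [TupFrom1, TdownTo1]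
  | (l + 2), h => by
    have ih := tup_tdown A B (l + 1) (fun i h1 h2 => h i h1 (by omega))
    calc TupFrom1 A (l + 2) * TdownTo1 B (l + 2)
        = TupFrom1 A (l + 1) * ((A (l + 1) * B (l + 1)) * TdownTo1 B (l + 1)) := by
          simp [TupFrom1, TdownTo1, mul_assoc]
      _ = 1 := by rw [h (l + 1) (by omega) (by omega), one_mul, ih]

lemma tdown_tup {M : Type*} [Monoid M] (A B : ℕ → M) :
    ∀ j, (∀ i, 1 ≤ i → i + 1 ≤ j → B i * A i = 1) →
      TdownTo1 B j * TupFrom1 A j = 1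
  | 0, _ => by simp [TupFrom1, TdownTo1]
  | 1, _ => by simp [TupFrom1, TdownTo1]
  | (l + 2), h => by
    have ih := tdown_tup A B (l + 1) (fun i h1 h2 => h i h1 (by omega))
    calc TdownTo1 B (l + 2) * TupFrom1 A (l + 2)
        = B (l + 1) * ((TdownTo1 B (l + 1) * TupFrom1 A (l + 1)) * A (l + 1)) := by
          simp [TupFrom1, TdownTo1, mul_assoc]
      _ = 1 := by rw [ih, one_mul, h (l + 1) (by omega) (by omega)]

end ZYaux
section ZYaux2

variable {F : Type*} [Field F] (q : F) (V : ℕ → Type*) [∀ k, AddCommGroup (V k)]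
    [∀ k, Module F (V k)]

lemma yOp_closed (T : ∀ k, ℕ → Module.End F (V k))
    (dm : ∀ k, V (k + 1) →ₗ[F] V k) (dp : ∀ k, V k →ₗ[F] V (k + 1)) (m : ℕ) :
    ∀ j, yOp q V T dm dp m (j + 1) =
      q ^ j • (TdownTo1 (fun i => heckeInv q (T (m + 1) i)) (j + 1) *
        yOp q V T dm dp m 1 * TupFrom1 (fun i => heckeInv q (T (m + 1) i)) (j + 1))
  | 0 => by simp [TdownTo1, TupFrom1]
  | (j + 1) => by
    rw [show yOp q V T dm dp m (j + 1 + 1) =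
        q • (heckeInv q (T (m + 1) (j + 1)) * yOp q V T dm dp m (j + 1) *
          heckeInv q (T (m + 1) (j + 1))) from rfl,
      yOp_closed T dm dp m j]
    simp only [TdownTo1, TupFrom1, pow_succ, mul_smul_comm, smul_mul_assoc,
      smul_smul, mul_assoc]
    rw [mul_comm (q ^ j) q]

lemma tdown_dm (S : ∀ k, ℕ → Module.End F (V k)) (dm : ∀ k, V (k + 1) →ₗ[F] V k)
    (m : ℕ)
    (h5 : ∀ i, 1 ≤ i → i ≤ m →
      (S (m + 1) i : V (m + 1) →ₗ[F] V (m + 1)) ∘ₗ dm (m + 1) =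
        dm (m + 1) ∘ₗ (S (m + 2) i : V (m + 2) →ₗ[F] V (m + 2))) :
    ∀ j, j ≤ m + 1 →
      (TdownTo1 (S (m + 1)) j : V (m + 1) →ₗ[F] V (m + 1)) ∘ₗ dm (m + 1) =
        dm (m + 1) ∘ₗ (TdownTo1 (S (m + 2)) j : V (m + 2) →ₗ[F] V (m + 2))
  | 0, _ => by simp [TdownTo1, Module.End.one_eq_id]
  | 1, _ => by simp [TdownTo1, Module.End.one_eq_id]
  | (l + 2), hl => by
    have ih := tdown_dm S dm m h5 (l + 1) (by omega)
    show ((S (m + 1) (l + 1) * TdownTo1 (S (m + 1)) (l + 1) :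
        Module.End F (V (m + 1))) : V (m + 1) →ₗ[F] V (m + 1)) ∘ₗ dm (m + 1) = _
    rw [Module.End.mul_eq_comp, comp_assoc, ih, ← comp_assoc,
      h5 (l + 1) (by omega) (by omega), comp_assoc]
    rfl

lemma comm_tdown_dm (p : F) (S : ∀ k, ℕ → Module.End F (V k))
    (dm : ∀ k, V (k + 1) →ₗ[F] V k) (e : ∀ k, V k →ₗ[F] V (k + 1)) (m : ℕ)
    (h5 : ∀ i, 1 ≤ i → i ≤ m →
      (S (m + 1) i : V (m + 1) →ₗ[F] V (m + 1)) ∘ₗ dm (m + 1) =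
        dm (m + 1) ∘ₗ (S (m + 2) i : V (m + 2) →ₗ[F] V (m + 2)))
    (h8 : dm (m + 1) ∘ₗ (commDD V dm e (m + 1) : V (m + 2) →ₗ[F] V (m + 2)) ∘ₗ
        (S (m + 2) (m + 1) : V (m + 2) →ₗ[F] V (m + 2)) =
      p • ((commDD V dm e m : V (m + 1) →ₗ[F] V (m + 1)) ∘ₗ dm (m + 1))) :
    dm (m + 1) ∘ₗ ((commDD V dm e (m + 1) * TdownTo1 (S (m + 2)) (m + 2) :
        Module.End F (V (m + 2))) : V (m + 2) →ₗ[F] V (m + 2)) =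
      p • (((commDD V dm e m * TdownTo1 (S (m + 1)) (m + 1) :
        Module.End F (V (m + 1))) : V (m + 1) →ₗ[F] V (m + 1)) ∘ₗ dm (m + 1)) := by
  have htd := tdown_dm V S dm m h5 (m + 1) le_rfl
  show dm (m + 1) ∘ₗ ((commDD V dm e (m + 1) *
      (S (m + 2) (m + 1) * TdownTo1 (S (m + 2)) (m + 1)) : Module.End F (V (m + 2))) :
      V (m + 2) →ₗ[F] V (m + 2)) = _
  rw [Module.End.mul_eq_comp, Module.End.mul_eq_comp, Module.End.mul_eq_comp]
  calc dm (m + 1) ∘ₗ ((commDD V dm e (m + 1) : V (m + 2) →ₗ[F] V (m + 2)) ∘ₗ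
        ((S (m + 2) (m + 1) : V (m + 2) →ₗ[F] V (m + 2)) ∘ₗ
          (TdownTo1 (S (m + 2)) (m + 1) : V (m + 2) →ₗ[F] V (m + 2))))
      = (dm (m + 1) ∘ₗ (commDD V dm e (m + 1) : V (m + 2) →ₗ[F] V (m + 2)) ∘ₗ
          (S (m + 2) (m + 1) : V (m + 2) →ₗ[F] V (m + 2))) ∘ₗ
          (TdownTo1 (S (m + 2)) (m + 1) : V (m + 2) →ₗ[F] V (m + 2)) := by
        rw [comp_assoc, comp_assoc]
    _ = (p • ((commDD V dm e m : V (m + 1) →ₗ[F] V (m + 1)) ∘ₗ dm (m + 1))) ∘ₗ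
          (TdownTo1 (S (m + 2)) (m + 1) : V (m + 2) →ₗ[F] V (m + 2)) := by rw [h8]
    _ = p • ((commDD V dm e m : V (m + 1) →ₗ[F] V (m + 1)) ∘ₗ
          (dm (m + 1) ∘ₗ (TdownTo1 (S (m + 2)) (m + 1) : V (m + 2) →ₗ[F] V (m + 2)))) := by
        rw [smul_comp, comp_assoc]
    _ = p • ((commDD V dm e m : V (m + 1) →ₗ[F] V (m + 1)) ∘ₗ
          ((TdownTo1 (S (m + 1)) (m + 1) : V (m + 1) →ₗ[F] V (m + 1)) ∘ₗ dm (m + 1))) := by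
        rw [htd]
    _ = p • ((commDD V dm e m * TdownTo1 (S (m + 1)) (m + 1) :
          Module.End F (V (m + 1))) : V (m + 1) →ₗ[F] V (m + 1)) ∘ₗ dm (m + 1) := by
        rw [Module.End.mul_eq_comp, comp_assoc]

end ZYaux2
section ZYaux3

variable {F : Type*} [Field F] (V : ℕ → Type*) [∀ k, AddCommGroup (V k)]
    [∀ k, Module F (V k)]

lemma dm_yone {q : F} (hq : q ≠ 0) (T : ∀ k, ℕ → Module.End F (V k))
    (dm : ∀ k, V (k + 1) →ₗ[F] V k) (dp : ∀ k, V k →ₗ[F] V (k + 1)) (m : ℕ)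
    (h5 : ∀ i, 1 ≤ i → i ≤ m →
      (T (m + 1) i : V (m + 1) →ₗ[F] V (m + 1)) ∘ₗ dm (m + 1) =
        dm (m + 1) ∘ₗ (T (m + 2) i : V (m + 2) →ₗ[F] V (m + 2)))
    (h8 : dm (m + 1) ∘ₗ (commDD V dm dp (m + 1) : V (m + 2) →ₗ[F] V (m + 2)) ∘ₗ
        (T (m + 2) (m + 1) : V (m + 2) →ₗ[F] V (m + 2)) =
      q • ((commDD V dm dp m : V (m + 1) →ₗ[F] V (m + 1)) ∘ₗ dm (m + 1))) :
    dm (m + 1) ∘ₗ (yOp q V T dm dp (m + 1) 1 : V (m + 2) →ₗ[F] V (m + 2)) =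
      (yOp q V T dm dp m 1 : V (m + 1) →ₗ[F] V (m + 1)) ∘ₗ dm (m + 1) := by
  have key := comm_tdown_dm V q T dm dp m h5 h8
  show dm (m + 1) ∘ₗ (((q ^ (m + 1) * (q - 1))⁻¹ •
      (commDD V dm dp (m + 1) * TdownTo1 (T (m + 2)) (m + 2)) :
        Module.End F (V (m + 2))) : V (m + 2) →ₗ[F] V (m + 2)) =
    (((q ^ m * (q - 1))⁻¹ •
      (commDD V dm dp m * TdownTo1 (T (m + 1)) (m + 1)) :
        Module.End F (V (m + 1))) : V (m + 1) →ₗ[F] V (m + 1)) ∘ₗ dm (m + 1)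
  rw [comp_smul, key, smul_comm, smul_comp, smul_smul]
  congr 1
  rcases eq_or_ne (q - 1) 0 with h1 | h1
  · simp [h1]
  · field_simp
    ring

lemma dm_zone {q : F} (hq : q ≠ 0) (T : ∀ k, ℕ → Module.End F (V k))
    (dm : ∀ k, V (k + 1) →ₗ[F] V k) (dps : ∀ k, V k →ₗ[F] V (k + 1)) (m : ℕ)
    (h5 : ∀ i, 1 ≤ i → i ≤ m →
      (heckeInv q (T (m + 1) i) : V (m + 1) →ₗ[F] V (m + 1)) ∘ₗ dm (m + 1) =
        dm (m + 1) ∘ₗ (heckeInv q (T (m + 2) i) : V (m + 2) →ₗ[F] V (m + 2)))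
    (h8 : dm (m + 1) ∘ₗ (commDD V dm dps (m + 1) : V (m + 2) →ₗ[F] V (m + 2)) ∘ₗ
        (heckeInv q (T (m + 2) (m + 1)) : V (m + 2) →ₗ[F] V (m + 2)) =
      q⁻¹ • ((commDD V dm dps m : V (m + 1) →ₗ[F] V (m + 1)) ∘ₗ dm (m + 1))) :
    dm (m + 1) ∘ₗ (zOp q V T dm dps (m + 1) 1 : V (m + 2) →ₗ[F] V (m + 2)) =
      (zOp q V T dm dps m 1 : V (m + 1) →ₗ[F] V (m + 1)) ∘ₗ dm (m + 1) := by
  have key := comm_tdown_dm V q⁻¹ (fun k i => heckeInv q (T k i)) dm dps m h5 h8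
  show dm (m + 1) ∘ₗ (((q ^ (m + 1 + 1) / (1 - q)) •
      (commDD V dm dps (m + 1) *
        TdownTo1 (fun i => heckeInv q (T (m + 2) i)) (m + 2)) :
        Module.End F (V (m + 2))) : V (m + 2) →ₗ[F] V (m + 2)) =
    (((q ^ (m + 1) / (1 - q)) •
      (commDD V dm dps m * TdownTo1 (fun i => heckeInv q (T (m + 1) i)) (m + 1)) :
        Module.End F (V (m + 1))) : V (m + 1) →ₗ[F] V (m + 1)) ∘ₗ dm (m + 1)
  rw [comp_smul, key, smul_comm, smul_comp, smul_smul]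
  congr 1
  rcases eq_or_ne (1 - q) 0 with h1 | h1
  · simp [h1]
  · field_simp
    ring

end ZYaux3

lemma smul_combo {F : Type*} [Field F] {M : Type*} [AddCommGroup M] [Module F M]
    (S α β γ δ τ : F) (a b : M) (h1 : S * α = τ * γ) (h2 : S * β = τ * γ - δ) :
    S • (α • a - β • b) = τ • γ • (a - b) + δ • b := by
  rw [smul_sub, smul_smul, smul_smul, h1, h2, smul_smul, smul_sub, sub_smul]
  abel
set_option maxHeartbeats 2000000

/-- With `ỹ_1 := T_{1↗k} y_k T*_{k↘1}` on `V_k` (`k = m+1`), one has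
`z_1 ỹ_1 = t y_1 z_1 + t q^k d₋ y_1 d₊* T*_{k↘1}` as operators on `V_k`. -/
theorem z_one_ytilde_one (V : ℕ → Type*) [∀ k, AddCommGroup (V k)]
    [∀ k, Module Fqt (V k)] (T : ∀ k, ℕ → Module.End Fqt (V k))
    (dm : ∀ k, V (k + 1) →ₗ[Fqt] V k) (dp dps : ∀ k, V k →ₗ[Fqt] V (k + 1))
    (h : CorrectlyIntertwined qv tv V T dm dp dps) :
    ∀ m, zOp qv V T dm dps m 1 *
        (TupFrom1 (T (m + 1)) (m + 1) * yOp qv V T dm dp m (m + 1) *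
          TdownTo1 (fun i => heckeInv qv (T (m + 1) i)) (m + 1)) =
      tv • (yOp qv V T dm dp m 1 * zOp qv V T dm dps m 1) +
        (tv * qv ^ (m + 1)) •
          (dm (m + 1) ∘ₗ (yOp qv V T dm dp (m + 1) 1 : V (m + 2) →ₗ[Fqt] V (m + 2)) ∘ₗ
            dps (m + 1) ∘ₗ
            (TdownTo1 (fun i => heckeInv qv (T (m + 1) i)) (m + 1) :
              V (m + 1) →ₗ[Fqt] V (m + 1))) := by
  have hinj : Function.Injective (algebraMap (MvPolynomial (Fin 2) ℚ) Fqt) := by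
    set_option maxHeartbeats 1000000 in
    exact IsFractionRing.injective _ _
  have h0 : (MvPolynomial.X 0 : MvPolynomial (Fin 2) ℚ) ≠ 0 := by
    intro hcon
    have := congrArg (MvPolynomial.eval (fun _ => (1 : ℚ))) hcon
    simp at this
  have h1 : (MvPolynomial.X 0 : MvPolynomial (Fin 2) ℚ) ≠ 1 := by
    intro hcon
    have := congrArg (MvPolynomial.eval (fun _ => (0 : ℚ))) hcon
    simp at this
  have hq : qv ≠ 0 := by
    intro hcon
    simp only [qv] at hcon
    exact h0 (hinj (hcon.trans (map_zero _).symm))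
  have hq1 : qv ≠ 1 := by
    intro hcon
    simp only [qv] at hcon
    exact h1 (hinj (hcon.trans (map_one _).symm))
  have hq1' : qv - 1 ≠ 0 := sub_ne_zero.mpr hq1
  have h1q : 1 - qv ≠ 0 := sub_ne_zero.mpr (Ne.symm hq1)
  obtain ⟨hAq, hAq', hIw⟩ := h
  obtain ⟨r1, r2, r3, r4, r5, r6, r7, r8, r9⟩ := hAq
  obtain ⟨s1, s2, s3, s4, s5, s6, s7, s8, s9⟩ := hAq'
  obtain ⟨i1, i2, i3⟩ := hIw
  intro m
  have hinv : ∀ i, 1 ≤ i → i + 1 ≤ m + 1 →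
      T (m + 1) i * heckeInv qv (T (m + 1) i) = 1 ∧
        heckeInv qv (T (m + 1) i) * T (m + 1) i = 1 :=
    fun i hi1 hi2 => hecke_mul_inv hq (r1 (m + 1) i hi1 hi2)
  have f1 : TupFrom1 (T (m + 1)) (m + 1) *
      TdownTo1 (fun i => heckeInv qv (T (m + 1) i)) (m + 1) = 1 :=
    tup_tdown _ _ (m + 1) (fun i hi1 hi2 => (hinv i hi1 hi2).1)
  have f3 : TdownTo1 (T (m + 1)) (m + 1) *
      TupFrom1 (fun i => heckeInv qv (T (m + 1) i)) (m + 1) = 1 :=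
    tdown_tup _ _ (m + 1) (fun i hi1 hi2 => (hinv i hi1 hi2).1)
  have hE := dm_yone V hq T dm dp m (fun i hi1 hi2 => r5 m i hi1 hi2) (r8 m)
  have hD2 := dm_zone V hq T dm dps m (fun i hi1 hi2 => s5 m i hi1 hi2) (s8 m)
  have key1 : TupFrom1 (T (m + 1)) (m + 1) * yOp qv V T dm dp m (m + 1) *
      TdownTo1 (fun i => heckeInv qv (T (m + 1) i)) (m + 1)
      = (qv ^ m * (qv ^ m * (qv - 1))⁻¹) • (commDD V dm dp m *
          TdownTo1 (fun i => heckeInv qv (T (m + 1) i)) (m + 1)) := by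
    rw [yOp_closed qv V T dm dp m m,
      show yOp qv V T dm dp m 1 = (qv ^ m * (qv - 1))⁻¹ •
        (commDD V dm dp m * TdownTo1 (T (m + 1)) (m + 1)) from rfl]
    simp only [smul_mul_assoc, mul_smul_comm, smul_smul, mul_assoc]
    rw [← mul_assoc (TdownTo1 (T (m + 1)) (m + 1)), f3, one_mul,
      ← mul_assoc (TupFrom1 (T (m + 1)) (m + 1)), f1, one_mul]
  -- pointwise consequences
  have p1 : ∀ u, zOp qv V T dm dps m 1 (dp m u) =
      (-(tv * qv ^ (m + 1))) • yOp qv V T dm dp m 1 (dps m u) := fun u => by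
    have := LinearMap.congr_fun (i3 m) u
    simpa using this
  have p2 : ∀ u, zOp qv V T dm dps m 1 (dm (m + 1) u) =
      dm (m + 1) (zOp qv V T dm dps (m + 1) 1 u) := fun u => by
    have := LinearMap.congr_fun hD2 u
    simpa using this.symm
  have p3 : ∀ u, zOp qv V T dm dps (m + 1) 1 (dp (m + 1) u) =
      (-(tv * qv ^ (m + 1 + 1))) • yOp qv V T dm dp (m + 1) 1 (dps (m + 1) u) :=
    fun u => by
    have := LinearMap.congr_fun (i3 (m + 1)) u
    simpa using this
  have p4 : ∀ u, yOp qv V T dm dp m 1 (dm (m + 1) u) =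
      dm (m + 1) (yOp qv V T dm dp (m + 1) 1 u) := fun u => by
    have := LinearMap.congr_fun hE u
    simpa using this.symm
  have pz : ∀ u, zOp qv V T dm dps m 1 u = (qv ^ (m + 1) / (1 - qv)) •
      (commDD V dm dps m)
        (TdownTo1 (fun i => heckeInv qv (T (m + 1) i)) (m + 1) u) := fun u => rfl
  rw [key1, mul_smul_comm, ← mul_assoc (zOp qv V T dm dps m 1)]
  apply LinearMap.ext
  intro x
  simp only [LinearMap.smul_apply, LinearMap.add_apply, Module.End.mul_apply,
    LinearMap.comp_apply]
  rw [show commDD V dm dp m = dp m ∘ₗ dm m - dm (m + 1) ∘ₗ dp (m + 1) from rfl]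
  simp only [LinearMap.sub_apply, LinearMap.comp_apply, map_sub]
  rw [p1, p2, p3, map_smul, pz x,
    map_smul,
    show commDD V dm dps m = dps m ∘ₗ dm m - dm (m + 1) ∘ₗ dps (m + 1) from rfl]
  simp only [LinearMap.sub_apply, LinearMap.comp_apply, map_sub]
  rw [p4]
  apply smul_combo
  · field_simp
    ring
  · field_simp
    ring
end
end
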